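/- If X is a deterministic context-free language and Y is a parsing expression language, then the concatenation XY = {xy | x ∈ X, y ∈ Y} is a parsing expression language. -/

import Mathlib

set_option linter.unusedSectionVars false
set_option maxHeartbeats 1000000


/-! ### Parsing expression grammars -/

/-- Parsing expressions over nonterminals `N` and input alphabet `A`:
`ε`, terminals, nonterminals, sequence, prioritized choice, not-predicate. -/
inductive PExp (N A : Type) : Type where
  | eps : PExp N A
  | term : A → PExp N A
  | nt : N → PExp N A
  | seq : PExp N A → PExp N A → PExp N A
  | choice : PExp N A → PExp N A → PExp N A
  | not : PExp N A → PExp N A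

/-- A parsing expression grammar: one rule per nonterminal, and an axiom. -/
structure PEG (N A : Type) : Type where
  rule : N → PExp N A
  start : N

/-- Big-step relational semantics of the PEG parsing function `R`:
`Parses G e w r` means `R(e, w) = r`, where `r = none` encodes the failure `F`
and `r = some s` means that `e` consumed a prefix of `w` leaving the suffix `s`.
`R(e, w)` is defined iff `∃ r, Parses G e w r`. -/
inductive Parses {N A : Type} (G : PEG N A) : PExp N A → List A → Option (List A) → Prop where
  | eps (w : List A) : Parses G .eps w (some w)
  | term_ok (a : A) (s : List A) : Parses G (.term a) (a :: s) (some s)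
  | term_mismatch {a b : A} (s : List A) (h : a ≠ b) : Parses G (.term a) (b :: s) none
  | term_nil (a : A) : Parses G (.term a) [] none
  | nt {B : N} {w : List A} {r : Option (List A)} :
      Parses G (G.rule B) w r → Parses G (.nt B) w r
  | seq_ok {e₁ e₂ : PExp N A} {w w' : List A} {r : Option (List A)} :
      Parses G e₁ w (some w') → Parses G e₂ w' r → Parses G (.seq e₁ e₂) w r
  | seq_fail {e₁ e₂ : PExp N A} {w : List A} :
      Parses G e₁ w none → Parses G (.seq e₁ e₂) w none
  | choice_fst {e₁ e₂ : PExp N A} {w w' : List A} :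
      Parses G e₁ w (some w') → Parses G (.choice e₁ e₂) w (some w')
  | choice_snd {e₁ e₂ : PExp N A} {w : List A} {r : Option (List A)} :
      Parses G e₁ w none → Parses G e₂ w r → Parses G (.choice e₁ e₂) w r
  | not_succ {e : PExp N A} {w : List A} :
      Parses G e w none → Parses G (.not e) w (some w)
  | not_fail {e : PExp N A} {w w' : List A} :
      Parses G e w (some w') → Parses G (.not e) w none

/-- The language generated by a PEG: `L(G) = {w | R(S, w) = ε}`. -/
def PEG.Lang {N A : Type} (G : PEG N A) : Set (List A) :=
  {w | Parses G (.nt G.start) w (some [])}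

/-- A PEG is complete if `R(S, w)` is defined for every input `w`. -/
def PEG.Complete {N A : Type} (G : PEG N A) : Prop :=
  ∀ w : List A, ∃ r, Parses G (.nt G.start) w r

/-- Conservative test whether an expression could succeed without consuming input. -/
def PExp.maybeEmpty {N A : Type} : PExp N A → Bool
  | .eps => true
  | .term _ => false
  | .nt _ => true
  | .seq e₁ e₂ => e₁.maybeEmpty && e₂.maybeEmpty
  | .choice e₁ e₂ => e₁.maybeEmpty || e₂.maybeEmpty
  | .not _ => true

/-- The nonterminals that an expression can invoke without first consuming input. -/
def PExp.leftNts {N A : Type} : PExp N A → Set N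
  | .eps => ∅
  | .term _ => ∅
  | .nt B => {B}
  | .seq e₁ e₂ => e₁.leftNts ∪ (if e₁.maybeEmpty then e₂.leftNts else ∅)
  | .choice e₁ e₂ => e₁.leftNts ∪ e₂.leftNts
  | .not e => e.leftNts

/-- A PEG is well-formed if it has no (directly or mutually) left-recursive rules:
no nonterminal can reach an invocation of itself without consuming input. -/
def PEG.WellFormed {N A : Type} (G : PEG N A) : Prop :=
  ∀ B : N, ¬ Relation.TransGen (fun X Y : N => Y ∈ (G.rule X).leftNts) B B

/-- A language is a parsing expression language (PEL) if it is generated by some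
well-formed PEG with a finite set of nonterminals. -/
def IsPEL {A : Type} (L : Set (List A)) : Prop :=
  ∃ (N : Type) (_ : Finite N) (G : PEG N A), G.WellFormed ∧ G.Lang = L

/-! ### Standard deterministic pushdown automata -/

/-- A standard one-way deterministic pushdown automaton accepting by final state,
with reading transitions `transA` and ε-transitions `transE`; determinism requires
that no ε-move is available whenever a reading move is. -/
structure DPDA (Q A Γ : Type) : Type where
  transA : Q → A → Γ → Option (Q × List Γ)
  transE : Q → Γ → Option (Q × List Γ)
  det : ∀ q Z, transE q Z ≠ none → ∀ a, transA q a Z = none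
  init : Q
  Z0 : Γ
  final : Q → Bool

/-- One move of a DPDA on configurations `(state, stack, remaining input)`. -/
inductive DPDA.Step {Q A Γ : Type} (M : DPDA Q A Γ) :
    Q × List Γ × List A → Q × List Γ × List A → Prop where
  | readA {q : Q} {a : A} {Z : Γ} {γ : List Γ} {u : List A} {p : Q} {β : List Γ} :
      M.transA q a Z = some (p, β) → DPDA.Step M (q, Z :: γ, a :: u) (p, β ++ γ, u)
  | readE {q : Q} {Z : Γ} {γ : List Γ} {u : List A} {p : Q} {β : List Γ} :
      M.transE q Z = some (p, β) → DPDA.Step M (q, Z :: γ, u) (p, β ++ γ, u)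

/-- The language of a DPDA: words after whose consumption a final state is reached. -/
def DPDA.Lang {Q A Γ : Type} (M : DPDA Q A Γ) : Set (List A) :=
  {w | ∃ (p : Q) (γ : List Γ),
    Relation.ReflTransGen (DPDA.Step M) (M.init, [M.Z0], w) (p, γ, []) ∧ M.final p = true}

/-- A language is a DCFL if it is recognized by some DPDA with finitely many
states and stack symbols. -/
def IsDCFL {A : Type} (L : Set (List A)) : Prop :=
  ∃ (Q Γ : Type) (_ : Finite Q) (_ : Finite Γ) (M : DPDA Q A Γ), M.Lang = L

/-- Concatenation of languages: `XY = {xy | x ∈ X, y ∈ Y}`. -/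
def concatL {A : Type} (X Y : Set (List A)) : Set (List A) :=
  {w | ∃ x ∈ X, ∃ y ∈ Y, w = x ++ y}


/-! ### Auxiliary development -/

section PEGBasics

variable {N A : Type} {G : PEG N A}

theorem Parses.det {e : PExp N A} {w : List A} {r₁ : Option (List A)}
    (h₁ : Parses G e w r₁) : ∀ {r₂ : Option (List A)}, Parses G e w r₂ → r₁ = r₂ := by
  induction h₁ with
  | eps w => intro r₂ h₂; cases h₂; rfl
  | term_ok a s =>
      intro r₂ h₂
      cases h₂ with
      | term_ok => rfl
      | term_mismatch _ h => exact absurd rfl h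
  | term_mismatch s h =>
      intro r₂ h₂
      cases h₂ with
      | term_ok => exact absurd rfl h
      | term_mismatch => rfl
  | term_nil a => intro r₂ h₂; cases h₂; rfl
  | nt _ ih => intro r₂ h₂; cases h₂ with | nt h => exact ih h
  | seq_ok h₁ h₂ ih₁ ih₂ =>
      intro r₂ h
      cases h with
      | seq_ok g₁ g₂ => injection ih₁ g₁ with hw; subst hw; exact ih₂ g₂
      | seq_fail g => cases ih₁ g
  | seq_fail h ih =>
      intro r₂ hh
      cases hh with
      | seq_ok g₁ _ => cases ih g₁
      | seq_fail => rfl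
  | choice_fst h ih =>
      intro r₂ hh
      cases hh with
      | choice_fst g => exact ih g
      | choice_snd g _ => cases ih g
  | choice_snd h₁ h₂ ih₁ ih₂ =>
      intro r₂ hh
      cases hh with
      | choice_fst g => cases ih₁ g
      | choice_snd g₁ g₂ => exact ih₂ g₂
  | not_succ h ih =>
      intro r₂ hh
      cases hh with
      | not_succ g => rfl
      | not_fail g => cases ih g
  | not_fail h ih =>
      intro r₂ hh
      cases hh with
      | not_succ g => cases ih g
      | not_fail g => rfl

theorem Parses.suffix' {e : PExp N A} {w : List A} {r : Option (List A)}
    (h : Parses G e w r) : ∀ v, r = some v → v <:+ w := by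
  induction h with
  | eps w => intro v hv; cases hv; exact List.suffix_rfl
  | term_ok a s => intro v hv; cases hv; exact List.suffix_cons a s
  | term_mismatch s h => intro v hv; cases hv
  | term_nil a => intro v hv; cases hv
  | nt _ ih => exact ih
  | seq_ok h₁ h₂ ih₁ ih₂ =>
      intro v hv
      exact (ih₂ v hv).trans (ih₁ _ rfl)
  | seq_fail h ih => intro v hv; cases hv
  | choice_fst h ih => exact ih
  | choice_snd h₁ h₂ ih₁ ih₂ => exact ih₂
  | not_succ h ih => intro v hv; cases hv; exact List.suffix_rfl
  | not_fail h ih => intro v hv; cases hv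

theorem Parses.suffix {e : PExp N A} {w v : List A}
    (h : Parses G e w (some v)) : v <:+ w := h.suffix' v rfl

theorem Parses.maybeEmpty_of_no_consume' {e : PExp N A} {w : List A} {r : Option (List A)}
    (h : Parses G e w r) : r = some w → e.maybeEmpty = true := by
  induction h with
  | eps w => intro _; rfl
  | term_ok a s =>
      intro hv
      injection hv with hv
      exact absurd (congrArg List.length hv) (by simp)
  | term_mismatch s h => intro hv; cases hv
  | term_nil a => intro hv; cases hv
  | nt _ ih => intro _; rfl
  | seq_ok h₁ h₂ ih₁ ih₂ =>
      intro hv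
      cases hv
      -- result w, via intermediate w'
      have hs₂ := h₂.suffix
      have hs₁ := h₁.suffix
      have : _ = _ := List.IsSuffix.eq_of_length hs₂ (le_antisymm hs₂.length_le hs₁.length_le)
      subst this
      simp [PExp.maybeEmpty, ih₁ rfl, ih₂ rfl]
  | seq_fail h ih => intro hv; cases hv
  | choice_fst h ih =>
      intro hv; cases hv
      simp [PExp.maybeEmpty, ih rfl]
  | choice_snd h₁ h₂ ih₁ ih₂ =>
      intro hv; cases hv
      simp [PExp.maybeEmpty, ih₂ rfl]
  | not_succ h ih => intro _; rfl
  | not_fail h ih => intro hv; cases hv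

theorem Parses.maybeEmpty_of_no_consume {e : PExp N A} {w : List A}
    (h : Parses G e w (some w)) : e.maybeEmpty = true :=
  h.maybeEmpty_of_no_consume' rfl

/-- The "is invoked as a left call by" relation: `C` is smaller than `B`. -/
def PEG.LC (G : PEG N A) (C B : N) : Prop := C ∈ (G.rule B).leftNts

theorem PEG.LC_wf [Finite N] (hwf : G.WellFormed) : WellFounded G.LC := by
  have htrans : Transitive (Relation.TransGen G.LC) := fun a b c h₁ h₂ => h₁.trans h₂
  have hirr : Irreflexive (Relation.TransGen G.LC) := by
    intro B hB
    apply hwf B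
    have : Relation.TransGen (flip G.LC) B B := by
      rw [Relation.transGen_swap]; exact hB
    exact this
  have : IsTrans N (Relation.TransGen G.LC) := ⟨htrans⟩
  have : IsIrrefl N (Relation.TransGen G.LC) := ⟨hirr⟩
  exact Subrelation.wf (fun {a b} h => Relation.TransGen.single h)
    (Finite.wellFounded_of_trans_of_irrefl (Relation.TransGen G.LC))

theorem parses_total_aux {w : List A}
    (hlen : ∀ v : List A, v.length < w.length → ∀ e : PExp N A, ∃ r, Parses G e v r)
    (e : PExp N A) (hnt : ∀ C ∈ e.leftNts, ∃ r, Parses G (.nt C) w r) :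
    ∃ r, Parses G e w r := by
  induction e with
  | eps => exact ⟨some w, .eps w⟩
  | term a =>
      match w with
      | [] => exact ⟨none, .term_nil a⟩
      | b :: s =>
          by_cases hab : a = b
          · subst hab; exact ⟨some s, .term_ok a s⟩
          · exact ⟨none, .term_mismatch s hab⟩
  | nt C => exact hnt C (by simp [PExp.leftNts])
  | seq e₁ e₂ ih₁ ih₂ =>
      obtain ⟨r₁, h₁⟩ := ih₁ (fun C hC => hnt C (by simp [PExp.leftNts]; exact Or.inl hC))
      match r₁ with
      | none => exact ⟨none, .seq_fail h₁⟩
      | some w' =>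
          rcases lt_or_eq_of_le h₁.suffix.length_le with hlt | heq
          · obtain ⟨r₂, h₂⟩ := hlen w' hlt e₂
            exact ⟨r₂, .seq_ok h₁ h₂⟩
          · have hw : w' = w := List.IsSuffix.eq_of_length h₁.suffix heq
            subst hw
            have hme := h₁.maybeEmpty_of_no_consume
            obtain ⟨r₂, h₂⟩ := ih₂ (fun C hC => hnt C (by simp [PExp.leftNts, hme]; exact Or.inr hC))
            exact ⟨r₂, .seq_ok h₁ h₂⟩
  | choice e₁ e₂ ih₁ ih₂ =>
      obtain ⟨r₁, h₁⟩ := ih₁ (fun C hC => hnt C (by simp [PExp.leftNts]; exact Or.inl hC))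
      match r₁ with
      | some w' => exact ⟨some w', .choice_fst h₁⟩
      | none =>
          obtain ⟨r₂, h₂⟩ := ih₂ (fun C hC => hnt C (by simp [PExp.leftNts]; exact Or.inr hC))
          exact ⟨r₂, .choice_snd h₁ h₂⟩
  | not e ih =>
      obtain ⟨r, h⟩ := ih (fun C hC => hnt C (by simpa [PExp.leftNts] using hC))
      match r with
      | none => exact ⟨some w, .not_succ h⟩
      | some w' => exact ⟨none, .not_fail h⟩

theorem parses_total [Finite N] (hwf : G.WellFormed) (w : List A) (e : PExp N A) :
    ∃ r, Parses G e w r := by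
  suffices H : ∀ n (w : List A), w.length ≤ n → ∀ e : PExp N A, ∃ r, Parses G e w r by
    exact H w.length w le_rfl e
  intro n
  induction n using Nat.strong_induction_on with
  | _ n IH =>
      intro w hw
      have hlen : ∀ v : List A, v.length < w.length → ∀ e : PExp N A, ∃ r, Parses G e v r :=
        fun v hv e => IH v.length (lt_of_lt_of_le hv hw) v le_rfl e
      have hForNt : ∀ B : N, ∃ r, Parses G (.nt B) w r := by
        intro B
        induction B using WellFounded.induction (PEG.LC_wf hwf) with
        | _ B IH2 =>
            obtain ⟨r, h⟩ := parses_total_aux hlen (G.rule B) (fun C hC => IH2 C hC)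
            exact ⟨r, .nt h⟩
      intro e
      exact parses_total_aux hlen e (fun C _ => hForNt C)

/-- Renaming the nonterminals of a parsing expression. -/
def PExp.mapN {N₂ : Type} (f : N → N₂) : PExp N A → PExp N₂ A
  | .eps => .eps
  | .term a => .term a
  | .nt B => .nt (f B)
  | .seq e₁ e₂ => .seq (e₁.mapN f) (e₂.mapN f)
  | .choice e₁ e₂ => .choice (e₁.mapN f) (e₂.mapN f)
  | .not e => .not (e.mapN f)

theorem PExp.mapN_maybeEmpty {N₂ : Type} (f : N → N₂) (e : PExp N A) :
    (e.mapN f).maybeEmpty = e.maybeEmpty := by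
  induction e <;> simp [PExp.mapN, PExp.maybeEmpty, *]

theorem PExp.mapN_leftNts {N₂ : Type} (f : N → N₂) (e : PExp N A) :
    (e.mapN f).leftNts = f '' e.leftNts := by
  induction e with
  | eps => simp [PExp.mapN, PExp.leftNts]
  | term a => simp [PExp.mapN, PExp.leftNts]
  | nt B => simp [PExp.mapN, PExp.leftNts]
  | seq e₁ e₂ ih₁ ih₂ =>
      simp only [PExp.mapN, PExp.leftNts, ih₁, ih₂, PExp.mapN_maybeEmpty]
      split <;> simp [Set.image_union]
  | choice e₁ e₂ ih₁ ih₂ => simp [PExp.mapN, PExp.leftNts, ih₁, ih₂, Set.image_union]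
  | not e ih => simpa [PExp.mapN, PExp.leftNts] using ih

theorem Parses.mapN {N₂ : Type} {G₂ : PEG N₂ A} {f : N → N₂}
    (hrule : ∀ n, G₂.rule (f n) = (G.rule n).mapN f)
    {e : PExp N A} {w : List A} {r : Option (List A)} (h : Parses G e w r) :
    Parses G₂ (e.mapN f) w r := by
  induction h with
  | eps w => exact .eps w
  | term_ok a s => exact .term_ok a s
  | term_mismatch s h => exact .term_mismatch s h
  | term_nil a => exact .term_nil a
  | nt h ih => exact .nt (by rw [hrule]; exact ih)
  | seq_ok h₁ h₂ ih₁ ih₂ => exact .seq_ok ih₁ ih₂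
  | seq_fail h ih => exact .seq_fail ih
  | choice_fst h ih => exact .choice_fst ih
  | choice_snd h₁ h₂ ih₁ ih₂ => exact .choice_snd ih₁ ih₂
  | not_succ h ih => exact .not_succ ih
  | not_fail h ih => exact .not_fail ih

end PEGBasics


section DPDARuns

open Relation

variable {Q A Γ : Type} {M : DPDA Q A Γ}

theorem DPDA.Step.det {c d₁ d₂ : Q × List Γ × List A}
    (h₁ : M.Step c d₁) (h₂ : M.Step c d₂) : d₁ = d₂ := by
  cases h₁ with
  | readA h =>
      cases h₂ with
      | readA h' => rw [h] at h'; injection h' with h'; cases h'; rfl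
      | readE h' =>
          exact absurd h (by rw [M.det _ _ (by rw [h']; simp) _]; simp)
  | readE h =>
      cases h₂ with
      | readA h' =>
          exact absurd h' (by rw [M.det _ _ (by rw [h]; simp) _]; simp)
      | readE h' => rw [h] at h'; injection h' with h'; cases h'; rfl

theorem DPDA.no_step_nil {q : Q} {w : List A} {d} : ¬ M.Step (q, ([] : List Γ), w) d := by
  intro h; cases h

theorem DPDA.rtg_confl {c d₁ : Q × List Γ × List A}
    (h₁ : ReflTransGen M.Step c d₁) :
    ∀ d₂, ReflTransGen M.Step c d₂ →
      ReflTransGen M.Step d₁ d₂ ∨ ReflTransGen M.Step d₂ d₁ := by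
  induction h₁ using ReflTransGen.head_induction_on with
  | refl => intro d₂ h₂; exact Or.inl h₂
  | head hstep _ IH =>
      intro d₂ h₂
      rcases h₂.cases_head with rfl | ⟨c', hs', ht'⟩
      · exact Or.inr (ReflTransGen.head hstep (by assumption))
      · cases hstep.det hs'
        exact IH _ ht'

/-- A configuration from which no move is possible. -/
def DPDA.StuckAt (M : DPDA Q A Γ) (c : Q × List Γ × List A) : Prop := ∀ d, ¬ M.Step c d

theorem DPDA.rtg_stuck_unique {c d₁ d₂ : Q × List Γ × List A}
    (h₁ : ReflTransGen M.Step c d₁) (hs : M.StuckAt d₁)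
    (h₂ : ReflTransGen M.Step c d₂) : ReflTransGen M.Step d₂ d₁ := by
  rcases DPDA.rtg_confl h₁ d₂ h₂ with h | h
  · rcases h.cases_head with rfl | ⟨c', hs', _⟩
    · exact .refl
    · exact absurd hs' (hs c')
  · exact h

theorem DPDA.Step.stack_append {c d : Q × List Γ × List A} (h : M.Step c d) (τ : List Γ) :
    M.Step (c.1, c.2.1 ++ τ, c.2.2) (d.1, d.2.1 ++ τ, d.2.2) := by
  cases h with
  | readA h =>
      show M.Step (_, _ :: _ ++ τ, _) _
      rw [List.append_assoc]
      exact .readA h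
  | readE h =>
      show M.Step (_, _ :: _ ++ τ, _) _
      rw [List.append_assoc]
      exact .readE h

theorem DPDA.rtg_stack_append {c d : Q × List Γ × List A}
    (h : ReflTransGen M.Step c d) (τ : List Γ) :
    ReflTransGen M.Step (c.1, c.2.1 ++ τ, c.2.2) (d.1, d.2.1 ++ τ, d.2.2) := by
  induction h with
  | refl => exact .refl
  | tail _ hstep IH => exact IH.tail (hstep.stack_append τ)

theorem DPDA.Step.input_append {c d : Q × List Γ × List A} (h : M.Step c d) (v : List A) :
    M.Step (c.1, c.2.1, c.2.2 ++ v) (d.1, d.2.1, d.2.2 ++ v) := by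
  cases h with
  | readA h => exact DPDA.Step.readA h
  | readE h => exact DPDA.Step.readE h

theorem DPDA.rtg_input_append {c d : Q × List Γ × List A}
    (h : ReflTransGen M.Step c d) (v : List A) :
    ReflTransGen M.Step (c.1, c.2.1, c.2.2 ++ v) (d.1, d.2.1, d.2.2 ++ v) := by
  induction h with
  | refl => exact .refl
  | tail _ hstep IH => exact IH.tail (hstep.input_append v)

theorem DPDA.Step.input_suffix {c d : Q × List Γ × List A} (h : M.Step c d) :
    d.2.2 <:+ c.2.2 := by
  cases h with
  | readA h => exact List.suffix_cons _ _
  | readE h => exact List.suffix_rfl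

theorem DPDA.rtg_input_suffix {c d : Q × List Γ × List A}
    (h : ReflTransGen M.Step c d) : d.2.2 <:+ c.2.2 := by
  induction h with
  | refl => exact List.suffix_rfl
  | tail _ hstep IH => exact hstep.input_suffix.trans IH

theorem DPDA.rtg_input_drop {c : Q × List Γ × List A} {q' : Q} {γ' : List Γ} {v : List A}
    (h : ReflTransGen M.Step c (q', γ', v)) :
    ∀ q₀ γ₀ w u, c = (q₀, γ₀, w) → w = u ++ v →
      ReflTransGen M.Step (q₀, γ₀, u) (q', γ', []) := by
  induction h using ReflTransGen.head_induction_on with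
  | refl =>
      intro q₀ γ₀ w u hc hu
      injection hc with h1 h2; injection h2 with h2 h3
      subst h1; subst h2; subst h3
      have : u = [] := by
        have h := congrArg List.length hu
        simp only [List.length_append] at h
        exact List.eq_nil_of_length_eq_zero (by omega)
      subst this
      exact .refl
  | head hstep htail IH =>
      intro q₀ γ₀ w u hc hu; subst hc
      cases hstep with
      | readE h =>
          exact ReflTransGen.head (DPDA.Step.readE h) (IH _ _ _ u rfl hu)
      | readA h =>
          rename_i a Z γ u₁ p β
          have hsuf : v <:+ u₁ := by
            simpa using DPDA.rtg_input_suffix htail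
          match u, hu with
          | [], hu =>
              exfalso
              have h1 := congrArg List.length hu
              have h2 := hsuf.length_le
              simp at h1
              omega
          | b :: u₂, hu =>
              simp at hu
              obtain ⟨rfl, hu⟩ := hu
              exact ReflTransGen.head (DPDA.Step.readA h) (IH _ _ _ u₂ rfl hu)

theorem DPDA.rtg_stack_decomp {τ : List Γ} {c e : Q × List Γ × List A}
    (h : ReflTransGen M.Step c e) :
    ∀ p σ₀ u, c = (p, σ₀ ++ τ, u) →
      (∃ q σ₁ v, e = (q, σ₁ ++ τ, v) ∧ ReflTransGen M.Step (p, σ₀, u) (q, σ₁, v)) ∨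
      (∃ s v', ReflTransGen M.Step (p, σ₀, u) (s, [], v') ∧
        ReflTransGen M.Step (s, τ, v') e) := by
  induction h using ReflTransGen.head_induction_on with
  | refl => intro p σ₀ u hc; exact Or.inl ⟨p, σ₀, u, hc, .refl⟩
  | head hstep htail IH =>
      intro p σ₀ u hc; subst hc
      match σ₀ with
      | [] =>
          exact Or.inr ⟨p, u, .refl, ReflTransGen.head hstep htail⟩
      | Z :: γ₀ =>
          cases hstep with
          | readA h =>
              rename_i a u₁ p₁ β
              rcases IH p₁ (β ++ γ₀) u₁ (by simp [List.append_assoc]) with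
                ⟨q, σ₁, v, he, hr⟩ | ⟨s, v', hr₁, hr₂⟩
              · exact Or.inl ⟨q, σ₁, v, he, ReflTransGen.head (DPDA.Step.readA h) hr⟩
              · exact Or.inr ⟨s, v', ReflTransGen.head (DPDA.Step.readA h) hr₁, hr₂⟩
          | readE h =>
              rename_i p₁ β
              rcases IH p₁ (β ++ γ₀) u (by simp [List.append_assoc]) with
                ⟨q, σ₁, v, he, hr⟩ | ⟨s, v', hr₁, hr₂⟩
              · exact Or.inl ⟨q, σ₁, v, he, ReflTransGen.head (DPDA.Step.readE h) hr⟩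
              · exact Or.inr ⟨s, v', ReflTransGen.head (DPDA.Step.readE h) hr₁, hr₂⟩

/-! ε-move chains -/

/-- One ε-move on (state, stack). -/
def DPDA.estep (M : DPDA Q A Γ) : Q × List Γ → Option (Q × List Γ)
  | (_, []) => none
  | (q, Z :: γ) => (M.transE q Z).map fun pβ => (pβ.1, pβ.2 ++ γ)

/-- Iterated ε-moves. -/
def DPDA.chain (M : DPDA Q A Γ) (c : Q × List Γ) : ℕ → Option (Q × List Γ)
  | 0 => some c
  | n + 1 => (M.chain c n).bind M.estep

theorem DPDA.chain_none_mono {c : Q × List Γ} {n : ℕ} (h : M.chain c n = none) :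
    ∀ m, n ≤ m → M.chain c m = none := by
  intro m hm
  induction m with
  | zero => exact (Nat.le_zero.mp hm) ▸ h
  | succ k IH =>
      rcases Nat.lt_or_ge n (k+1) with h' | h'
      · have := IH (Nat.lt_succ_iff.mp h')
        simp [DPDA.chain, this]
      · exact (Nat.le_antisymm hm h') ▸ h

theorem DPDA.chain_succ_of_terminal {c d : Q × List Γ} {n : ℕ}
    (h : M.chain c n = some d) (ht : M.estep d = none) : M.chain c (n+1) = none := by
  simp [DPDA.chain, h, ht]

theorem DPDA.chain_terminal_unique {c d d' : Q × List Γ} {n n' : ℕ}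
    (h : M.chain c n = some d) (ht : M.estep d = none)
    (h' : M.chain c n' = some d') (ht' : M.estep d' = none) : n = n' ∧ d = d' := by
  rcases Nat.lt_trichotomy n n' with hlt | heq | hgt
  · exact absurd (DPDA.chain_none_mono (DPDA.chain_succ_of_terminal h ht) n' hlt) (by simp [h'])
  · subst heq; rw [h] at h'; exact ⟨rfl, by injection h'⟩
  · exact absurd (DPDA.chain_none_mono (DPDA.chain_succ_of_terminal h' ht') n hgt) (by simp [h])

theorem DPDA.chain_head {c : Q × List Γ} {n : ℕ} :
    M.chain c (n+1) = (M.estep c).bind (fun c' => M.chain c' n) := by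
  induction n with
  | zero => simp [DPDA.chain]
  | succ k IH =>
      show (M.chain c (k+1)).bind M.estep = _
      rw [IH]
      cases h : M.estep c with
      | none => simp
      | some c' => simp [DPDA.chain]

theorem DPDA.estep_step {q : Q} {γ : List Γ} {d : Q × List Γ} (h : M.estep (q, γ) = some d)
    (w : List A) : M.Step (q, γ, w) (d.1, d.2, w) := by
  match γ with
  | [] => simp [DPDA.estep] at h
  | Z :: γ₀ =>
      simp only [DPDA.estep, Option.map_eq_some_iff] at h
      obtain ⟨⟨p, β⟩, hp, hd⟩ := h
      subst hd
      exact DPDA.Step.readE hp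

theorem DPDA.chain_rtg {c d : Q × List Γ} {n : ℕ} (h : M.chain c n = some d) (w : List A) :
    ReflTransGen M.Step (c.1, c.2, w) (d.1, d.2, w) := by
  induction n generalizing d with
  | zero => simp [DPDA.chain] at h; subst h; exact .refl
  | succ k IH =>
      simp only [DPDA.chain, Option.bind_eq_some_iff] at h
      obtain ⟨d', hd', hstep⟩ := h
      exact (IH hd').tail (by
        have := DPDA.estep_step (q := d'.1) (γ := d'.2) (by simpa using hstep) w
        simpa using this)

/-- Every run out of a configuration first follows the ε-chain, possibly
eventually reading an input symbol at a stable configuration. -/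
theorem DPDA.rtg_through_chain {c e : Q × List Γ × List A}
    (h : ReflTransGen M.Step c e) :
    ∀ q₀ γ₀ w, c = (q₀, γ₀, w) →
      (∃ i d, M.chain (q₀, γ₀) i = some d ∧ e = (d.1, d.2, w)) ∨
      (∃ i q' Z' δ, M.chain (q₀, γ₀) i = some (q', Z' :: δ) ∧ M.transE q' Z' = none ∧
        ∃ a u p₁ β, w = a :: u ∧ M.transA q' a Z' = some (p₁, β) ∧
          ReflTransGen M.Step (p₁, β ++ δ, u) e) := by
  induction h using ReflTransGen.head_induction_on with
  | refl => intro q₀ γ₀ w hc; exact Or.inl ⟨0, (q₀, γ₀), rfl, hc⟩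
  | head hstep htail IH =>
      intro q₀ γ₀ w hc; subst hc
      cases hstep with
      | readA h =>
          rename_i a Z γ u p β
          have hE : M.transE q₀ Z = none := by
            by_contra hne
            rcases Option.ne_none_iff_exists'.mp hne with ⟨x, hx⟩
            exact absurd h (by rw [M.det _ _ (by rw [hx]; simp) _]; simp)
          exact Or.inr ⟨0, q₀, Z, γ, rfl, hE, a, u, p, β, rfl, h, htail⟩
      | readE h =>
          rename_i Z γ p β
          have hes : M.estep (q₀, Z :: γ) = some (p, β ++ γ) := by
            simp [DPDA.estep, h]
          rcases IH p (β ++ γ) w rfl with ⟨i, d, hch, he⟩ | ⟨i, q', Z', δ, hch, hE, rest⟩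
          · refine Or.inl ⟨i + 1, d, ?_, he⟩
            rw [DPDA.chain_head, hes]; simpa using hch
          · refine Or.inr ⟨i + 1, q', Z', δ, ?_, hE, rest⟩
            rw [DPDA.chain_head, hes]; simpa using hch

end DPDARuns

section Construction

open Relation

instance finiteOptionAux {α : Type} [Finite α] : Finite (Option α) :=
  Finite.of_equiv (α ⊕ (PUnit : Type)) (Equiv.optionEquivSumPUnit α).symm

variable {A Q Γ NY : Type} [Finite A] [Finite Q] [Finite Γ] [Finite NY]

/-- Nonterminals of the constructed grammar: a start symbol, the nonterminals
of the grammar for `Y`, and simulation nonterminals `(state, symbol, return)`. -/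
abbrev CNT (Q Γ NY : Type) : Type := Option (NY ⊕ (Q × Γ × Option Q))

def cy (n : NY) : CNT Q Γ NY := some (Sum.inl n)

def ct (p : Q) (Z : Γ) (ρ : Option Q) : CNT Q Γ NY := some (Sum.inr (p, Z, ρ))

theorem cy_injective : Function.Injective (cy (Q := Q) (Γ := Γ) (NY := NY)) := by
  intro a b h
  simpa [cy] using h

/-- An expression that always fails. -/
def pfail {N : Type} : PExp N A := .not .eps

theorem parses_pfail {N : Type} {G : PEG N A} (w : List A) :
    Parses G (pfail : PExp N A) w none := .not_fail (.eps w)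

/-- Prioritized choice over a list of alternatives. -/
def foldChoice {N : Type} (l : List (PExp N A)) : PExp N A := l.foldr .choice pfail

theorem parses_foldChoice_none {N : Type} {G : PEG N A} {l : List (PExp N A)} {w : List A}
    (h : ∀ e ∈ l, Parses G e w none) : Parses G (foldChoice l) w none := by
  induction l with
  | nil => exact parses_pfail w
  | cons f t IH =>
      exact .choice_snd (h f (by simp)) (IH (fun e he => h e (by simp [he])))

theorem parses_foldChoice_some {N : Type} {G : PEG N A} {l : List (PExp N A)}
    {w v : List A} {e : PExp N A} (hmem : e ∈ l) (he : Parses G e w (some v))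
    (hothers : ∀ e' ∈ l, e' = e ∨ Parses G e' w none) :
    Parses G (foldChoice l) w (some v) := by
  induction l with
  | nil => cases hmem
  | cons f t IH =>
      rcases List.mem_cons.mp hmem with rfl | hmt
      · exact .choice_fst he
      · rcases hothers f (by simp) with rfl | hf
        · exact .choice_fst he
        · exact .choice_snd hf (IH hmt (fun e' he' => hothers e' (by simp [he'])))

theorem leftNts_foldChoice {N : Type} (l : List (PExp N A)) :
    (foldChoice l).leftNts = ⋃ e ∈ l, e.leftNts := by
  induction l with
  | nil => simp [foldChoice, pfail, PExp.leftNts]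
  | cons f t IH =>
      simp [foldChoice, PExp.leftNts] at IH ⊢
      rw [IH]

variable (M : DPDA Q A Γ) (GY : PEG NY A)

noncomputable def aList : List A := (Fintype.ofFinite A).elems.toList

theorem mem_aList (a : A) : a ∈ (aList : List A) := by
  simp [aList, Finset.mem_toList]
  exact @Fintype.complete A (Fintype.ofFinite A) a

noncomputable def qList : List Q := (Fintype.ofFinite Q).elems.toList

theorem mem_qList (q : Q) : q ∈ (qList : List Q) := by
  simp [qList, Finset.mem_toList]
  exact @Fintype.complete Q (Fintype.ofFinite Q) q

/-- Matches any single input symbol. -/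
noncomputable def anyChar : PExp (CNT Q Γ NY) A :=
  foldChoice (aList.map .term)

/-- Succeeds exactly at the end of the input. -/
noncomputable def atEnd : PExp (CNT Q Γ NY) A := .not anyChar

/-- Tries to parse the whole remaining input as a member of `Y`. -/
noncomputable def ytest : PExp (CNT Q Γ NY) A := .seq (.nt (cy GY.start)) atEnd

/-- Does `GY` accept `v`? -/
def YA (v : List A) : Prop := Parses GY (.nt GY.start) v (some [])


/-- Was a final state seen along the ε-chain from `(p,[Z])` strictly before step `n`? -/
def finalSeenLT (p : Q) (Z : Γ) (n : ℕ) : Prop :=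
  ∃ i d, i < n ∧ M.chain (p, [Z]) i = some d ∧ M.final d.1 = true

/-- Was a final state seen along the ε-chain from `(p,[Z])` at or before step `n`? -/
def finalSeenLE (p : Q) (Z : Γ) (n : ℕ) : Prop :=
  ∃ i d, i ≤ n ∧ M.chain (p, [Z]) i = some d ∧ M.final d.1 = true

/-- Was a final state seen anywhere along the ε-chain from `(p,[Z])`? -/
def finalSeenAll (p : Q) (Z : Γ) : Prop :=
  ∃ i d, M.chain (p, [Z]) i = some d ∧ M.final d.1 = true

/-- Continuation expression: simulate the lifetimes of the stack symbols in `γ`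
starting in state `p`; for `ρ = none` accept as soon as an acceptance event occurs,
for `ρ = some q` require that all of `γ` is popped, ending in state `q`, without
any acceptance event. -/
noncomputable def cont (ρ : Option Q) : List Γ → Q → PExp (CNT Q Γ NY) A
  | [], p =>
      match ρ with
      | none => pfail
      | some q => open Classical in if p = q then .eps else pfail
  | Z :: δ, p =>
      let branches := foldChoice (qList.map fun s =>
        .seq (.nt (ct p Z (some s))) (cont ρ δ s))
      match ρ with
      | none => .choice (.nt (ct p Z none)) branches
      | some _ => branches

/-- Expression simulating one reading move at a stable configuration. -/
noncomputable def readExpr (ρ : Option Q) (q' : Q) (Z' : Γ) (δ : List Γ) :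
    PExp (CNT Q Γ NY) A :=
  foldChoice (aList.filterMap fun a =>
    (M.transA q' a Z').map fun rβ => .seq (.term a) (cont ρ (rβ.2 ++ δ) rβ.1))

open Classical in
/-- Rule body for the case where the ε-chain from `(p,[Z])` pops `Z` at step `n`
in state `r`. -/
noncomputable def popRule (p : Q) (Z : Γ) (ρ : Option Q) (n : ℕ) (r : Q) :
    PExp (CNT Q Γ NY) A :=
  match ρ with
  | none => if finalSeenLT M p Z n then ytest GY else pfail
  | some q =>
      if r = q then
        (if finalSeenLT M p Z n then .seq (.not (ytest GY)) .eps else .eps)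
      else pfail

open Classical in
/-- Rule body for the case where the ε-chain from `(p,[Z])` stabilizes at step `n`
in a reading configuration. -/
noncomputable def stabRule (p : Q) (Z : Γ) (ρ : Option Q) (n : ℕ) (d : Q × List Γ) :
    PExp (CNT Q Γ NY) A :=
  match d with
  | (_, []) => pfail
  | (q', Z' :: δ) =>
      let re := readExpr M ρ q' Z' δ
      match ρ with
      | none => if finalSeenLE M p Z n then .choice (ytest GY) re else re
      | some _ => if finalSeenLE M p Z n then .seq (.not (ytest GY)) re else re

open Classical in
/-- Rule body for the case where the ε-chain from `(p,[Z])` diverges. -/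
noncomputable def divRule (p : Q) (Z : Γ) (ρ : Option Q) : PExp (CNT Q Γ NY) A :=
  match ρ with
  | none => if finalSeenAll M p Z then ytest GY else pfail
  | some _ => pfail

open Classical in
/-- The rule for the simulation nonterminal `(p, Z, ρ)`. -/
noncomputable def ruleT (p : Q) (Z : Γ) (ρ : Option Q) : PExp (CNT Q Γ NY) A :=
  if h : ∃ n r, M.chain (p, [Z]) n = some (r, ([] : List Γ)) then
    popRule M GY p Z ρ h.choose h.choose_spec.choose
  else if h2 : ∃ n d, M.chain (p, [Z]) n = some d ∧ M.estep d = none then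
    stabRule M GY p Z ρ h2.choose h2.choose_spec.choose
  else
    divRule M GY p Z ρ

open Classical in
/-- The start rule. -/
noncomputable def startRule : PExp (CNT Q Γ NY) A :=
  .choice (.nt (ct M.init M.Z0 none))
    (foldChoice (qList.map fun s =>
      .seq (.nt (ct M.init M.Z0 (some s)))
        (if M.final s = true then ytest GY else pfail)))

/-- The constructed grammar for `X · Y`. -/
noncomputable def HG : PEG (CNT Q Γ NY) A where
  rule
    | none => startRule M GY
    | some (Sum.inl n) => (GY.rule n).mapN cy
    | some (Sum.inr (p, Z, ρ)) => ruleT M GY p Z ρ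
  start := none

theorem HG_rule_y (n : NY) : (HG M GY).rule (cy n) = (GY.rule n).mapN cy := rfl
theorem HG_rule_t (p : Q) (Z : Γ) (ρ : Option Q) :
    (HG M GY).rule (ct p Z ρ) = ruleT M GY p Z ρ := rfl
theorem HG_rule_start : (HG M GY).rule none = startRule M GY := rfl

/-! Behaviour of `ytest`. -/

theorem parses_anyChar_nil :
    Parses (HG M GY) (anyChar : PExp (CNT Q Γ NY) A) [] none := by
  apply parses_foldChoice_none
  intro e he
  simp only [List.mem_map] at he
  obtain ⟨a, _, rfl⟩ := he
  exact .term_nil a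

theorem parses_anyChar_cons (b : A) (t : List A) :
    Parses (HG M GY) (anyChar : PExp (CNT Q Γ NY) A) (b :: t) (some t) := by
  apply parses_foldChoice_some (e := .term b)
  · exact List.mem_map.mpr ⟨b, mem_aList b, rfl⟩
  · exact .term_ok b t
  · intro e' he'
    simp only [List.mem_map] at he'
    obtain ⟨a, _, rfl⟩ := he'
    by_cases hab : a = b
    · subst hab; exact Or.inl rfl
    · exact Or.inr (.term_mismatch t hab)

theorem parses_atEnd_nil :
    Parses (HG M GY) (atEnd : PExp (CNT Q Γ NY) A) [] (some []) :=
  .not_succ (parses_anyChar_nil M GY)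

theorem parses_atEnd_pos {w : List A} (hw : w ≠ []) :
    Parses (HG M GY) (atEnd : PExp (CNT Q Γ NY) A) w none := by
  match w with
  | [] => exact absurd rfl hw
  | b :: t => exact .not_fail (parses_anyChar_cons M GY b t)

theorem parses_ytest_some {v : List A} (h : YA GY v) :
    Parses (HG M GY) (ytest GY) v (some []) := by
  have h1 : Parses (HG M GY) (.nt (cy GY.start)) v (some []) := by
    have := Parses.mapN (G := GY) (G₂ := HG M GY) (f := cy) (HG_rule_y M GY) h
    exact this
  exact .seq_ok h1 (parses_atEnd_nil M GY)

theorem parses_ytest_none (hwfY : GY.WellFormed) {v : List A} (h : ¬ YA GY v) :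
    Parses (HG M GY) (ytest GY) v none := by
  obtain ⟨r, hr⟩ := parses_total hwfY v (.nt GY.start)
  have hr' : Parses (HG M GY) (.nt (cy GY.start)) v r :=
    Parses.mapN (G := GY) (G₂ := HG M GY) (f := cy) (HG_rule_y M GY) hr
  match r, hr, hr' with
  | none, _, hr' => exact .seq_fail hr'
  | some v', hrY, hr' =>
      have hv' : v' ≠ [] := by
        rintro rfl
        exact h hrY
      exact .seq_ok hr' (parses_atEnd_pos M GY hv')


/-! ### Specifications of the simulation nonterminals -/

/-- An acceptance event is reachable while the stack is nonempty. -/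
def SpecNoneC (c : Q × List Γ × List A) : Prop :=
  ∃ f δ v, ReflTransGen M.Step c (f, δ, v) ∧ δ ≠ [] ∧ M.final f = true ∧ YA GY v

/-- The stack is completely popped, ending in state `q` with remaining input `v`,
with no acceptance event happening before. -/
def SpecSomeC (c : Q × List Γ × List A) (q : Q) (v : List A) : Prop :=
  ReflTransGen M.Step c (q, ([] : List Γ), v) ∧ ¬ SpecNoneC M GY c

theorem specNoneC_nil (p : Q) (u : List A) : ¬ SpecNoneC M GY (p, ([] : List Γ), u) := by
  rintro ⟨f, δ, v, hr, hδ, -, -⟩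
  rcases hr.cases_head with heq | ⟨c', hs, -⟩
  · injection heq with h1 h2; injection h2 with h2 h3
    exact hδ h2.symm
  · exact DPDA.no_step_nil hs

theorem specSomeC_nil (p : Q) (u : List A) (q : Q) (v : List A) :
    SpecSomeC M GY (p, ([] : List Γ), u) q v ↔ q = p ∧ v = u := by
  constructor
  · rintro ⟨hr, -⟩
    rcases hr.cases_head with heq | ⟨c', hs, -⟩
    · injection heq with h1 h2; injection h2 with h2 h3
      exact ⟨h1.symm, h3.symm⟩
    · exact absurd hs DPDA.no_step_nil
  · rintro ⟨rfl, rfl⟩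
    exact ⟨.refl, specNoneC_nil M GY _ _⟩

theorem specSomeC_unique {c : Q × List Γ × List A} {q v q' v'}
    (h : SpecSomeC M GY c q v) (h' : SpecSomeC M GY c q' v') : q = q' ∧ v = v' := by
  have hstuck : M.StuckAt (q, ([] : List Γ), v) := fun d hd => DPDA.no_step_nil hd
  have := DPDA.rtg_stuck_unique h.1 hstuck h'.1
  rcases this.cases_head with heq | ⟨c', hs, -⟩
  · injection heq with h1 h2; injection h2 with h2 h3
    exact ⟨h1.symm, h3.symm⟩
  · exact absurd hs DPDA.no_step_nil

theorem specNoneC_cons (p : Q) (Z : Γ) (δ : List Γ) (u : List A) :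
    SpecNoneC M GY (p, Z :: δ, u) ↔
      SpecNoneC M GY (p, [Z], u) ∨
      ∃ s v', SpecSomeC M GY (p, [Z], u) s v' ∧ SpecNoneC M GY (s, δ, v') := by
  constructor
  · rintro ⟨f, δ', v, hr, hδ', hf, hy⟩
    have hr' : ReflTransGen M.Step (p, [Z] ++ δ, u) (f, δ', v) := by simpa using hr
    rcases DPDA.rtg_stack_decomp hr' p [Z] u rfl with ⟨q₁, σ₁, v₁, he, hrin⟩ | ⟨s, v', h1, h2⟩
    · injection he with h1 h2; injection h2 with h2 h3
      subst h1; subst h3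
      by_cases hσ : σ₁ = []
      · subst hσ
        simp only [List.nil_append] at h2
        subst h2
        by_cases hN : SpecNoneC M GY (p, [Z], u)
        · exact Or.inl hN
        · exact Or.inr ⟨f, v, ⟨hrin, hN⟩, ⟨f, δ', v, .refl, hδ', hf, hy⟩⟩
      · exact Or.inl ⟨f, σ₁, v, hrin, hσ, hf, hy⟩
    · by_cases hN : SpecNoneC M GY (p, [Z], u)
      · exact Or.inl hN
      · exact Or.inr ⟨s, v', ⟨h1, hN⟩, ⟨f, δ', v, h2, hδ', hf, hy⟩⟩
  · rintro (⟨f, δ₁, v, hr, hδ₁, hf, hy⟩ | ⟨s, v', ⟨hpop, -⟩, ⟨f, δ₁, v, hr2, hδ₁, hf, hy⟩⟩)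
    · have := DPDA.rtg_stack_append hr δ
      refine ⟨f, δ₁ ++ δ, v, by simpa using this, by simp [hδ₁], hf, hy⟩
    · have h0 := DPDA.rtg_stack_append hpop δ
      simp only [List.singleton_append, List.nil_append] at h0
      exact ⟨f, δ₁, v, h0.trans hr2, hδ₁, hf, hy⟩

theorem specSomeC_cons (p : Q) (Z : Γ) (δ : List Γ) (u : List A) (q : Q) (v : List A) :
    SpecSomeC M GY (p, Z :: δ, u) q v ↔
      ∃ s v', SpecSomeC M GY (p, [Z], u) s v' ∧ SpecSomeC M GY (s, δ, v') q v := by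
  constructor
  · rintro ⟨hr, hN⟩
    have hN1 : ¬ SpecNoneC M GY (p, [Z], u) := fun h =>
      hN ((specNoneC_cons M GY p Z δ u).mpr (Or.inl h))
    have hr' : ReflTransGen M.Step (p, [Z] ++ δ, u) (q, [], v) := by simpa using hr
    rcases DPDA.rtg_stack_decomp hr' p [Z] u rfl with ⟨q₁, σ₁, v₁, he, hrin⟩ | ⟨s, v', h1, h2⟩
    · injection he with h1 h2; injection h2 with h2 h3
      subst h1; subst h3
      obtain ⟨rfl, rfl⟩ : σ₁ = [] ∧ δ = [] := List.append_eq_nil_iff.mp h2.symm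
      refine ⟨q, v, ⟨hrin, hN1⟩, ?_⟩
      exact (specSomeC_nil M GY q v q v).mpr ⟨rfl, rfl⟩
    · refine ⟨s, v', ⟨h1, hN1⟩, h2, ?_⟩
      intro hh
      exact hN ((specNoneC_cons M GY p Z δ u).mpr (Or.inr ⟨s, v', ⟨h1, hN1⟩, hh⟩))
  · rintro ⟨s, v', ⟨h1, hN1⟩, ⟨h2, hN2⟩⟩
    constructor
    · have h0 := DPDA.rtg_stack_append h1 δ
      simp only [List.singleton_append, List.nil_append] at h0
      exact h0.trans h2
    · intro hh
      rcases (specNoneC_cons M GY p Z δ u).mp hh with h | ⟨s₂, v₂, hS2, hN2'⟩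
      · exact hN1 h
      · obtain ⟨rfl, rfl⟩ := specSomeC_unique M GY ⟨h1, hN1⟩ hS2
        exact hN2 hN2'

/-! ### Chain-case characterizations -/

theorem DPDA.estep_nil (q : Q) : M.estep (q, ([] : List Γ)) = none := rfl

theorem DPDA.estep_none_of_transE {q' : Q} {Z' : Γ} (h : M.transE q' Z' = none) (δ : List Γ) :
    M.estep (q', Z' :: δ) = none := by simp [DPDA.estep, h]

theorem chain_le_of_terminal {p : Q} {Z : Γ} {n i : ℕ} {d d' : Q × List Γ}
    (hn : M.chain (p, [Z]) n = some d) (ht : M.estep d = none)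
    (hi : M.chain (p, [Z]) i = some d') : i ≤ n := by
  by_contra hgt
  have := DPDA.chain_none_mono (DPDA.chain_succ_of_terminal hn ht) i (by omega)
  simp [this] at hi

theorem pop_specNone (p : Q) (Z : Γ) {n : ℕ} {r : Q}
    (hn : M.chain (p, [Z]) n = some (r, ([] : List Γ))) (w : List A) :
    SpecNoneC M GY (p, [Z], w) ↔ (finalSeenLT M p Z n ∧ YA GY w) := by
  constructor
  · rintro ⟨f, δ, v, hr, hδ, hf, hy⟩
    rcases DPDA.rtg_through_chain hr p [Z] w rfl with ⟨i, d, hchi, he⟩ |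
      ⟨i, q', Z', δ₂, hchi, hE, -⟩
    · injection he with h1 h2; injection h2 with h2 h3
      subst h1; subst h2; subst h3
      have hile : i ≤ n := chain_le_of_terminal M hn (DPDA.estep_nil M r) hchi
      have hilt : i < n := by
        rcases Nat.lt_or_ge i n with h | h
        · exact h
        · exfalso
          have : i = n := le_antisymm hile h
          subst this
          rw [hn] at hchi
          injection hchi with hchi
          rw [← hchi] at hδ
          exact hδ rfl
      exact ⟨⟨i, d, hilt, hchi, hf⟩, hy⟩
    · exfalso
      obtain ⟨h1, h2⟩ := DPDA.chain_terminal_unique hchi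
        (DPDA.estep_none_of_transE M hE δ₂) hn (DPDA.estep_nil M r)
      injection h2 with h2 h3
      simp at h3
  · rintro ⟨⟨i, d, hin, hchi, hf⟩, hy⟩
    have hδ : d.2 ≠ [] := by
      intro h0
      have ht : M.estep d = none := by
        obtain ⟨d1, d2⟩ := d
        simp at h0
        subst h0
        exact DPDA.estep_nil M d1
      obtain ⟨h1, -⟩ := DPDA.chain_terminal_unique hchi ht hn (DPDA.estep_nil M r)
      omega
    exact ⟨d.1, d.2, w, DPDA.chain_rtg hchi w, hδ, hf, hy⟩

theorem pop_specSome (p : Q) (Z : Γ) {n : ℕ} {r : Q}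
    (hn : M.chain (p, [Z]) n = some (r, ([] : List Γ))) (w : List A) (q : Q) (v : List A) :
    SpecSomeC M GY (p, [Z], w) q v ↔
      (q = r ∧ v = w ∧ ¬ SpecNoneC M GY (p, [Z], w)) := by
  constructor
  · rintro ⟨hr, hN⟩
    rcases DPDA.rtg_through_chain hr p [Z] w rfl with ⟨i, d, hchi, he⟩ |
      ⟨i, q', Z', δ₂, hchi, hE, -⟩
    · injection he with h1 h2; injection h2 with h2 h3
      have ht : M.estep d = none := by
        obtain ⟨d1, d2⟩ := d
        simp only at h2
        rw [← h2]
        exact DPDA.estep_nil M d1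
      obtain ⟨hh1, hh2⟩ := DPDA.chain_terminal_unique hchi ht hn (DPDA.estep_nil M r)
      subst hh2
      exact ⟨h1, h3, hN⟩
    · exfalso
      obtain ⟨h1, h2⟩ := DPDA.chain_terminal_unique hchi
        (DPDA.estep_none_of_transE M hE δ₂) hn (DPDA.estep_nil M r)
      injection h2 with h2 h3
      simp at h3
  · rintro ⟨rfl, rfl, hN⟩
    exact ⟨DPDA.chain_rtg hn v, hN⟩

theorem stab_specNone (p : Q) (Z : Γ) {n : ℕ} {q' : Q} {Z' : Γ} {δ : List Γ}
    (hn : M.chain (p, [Z]) n = some (q', Z' :: δ)) (hE : M.transE q' Z' = none) (w : List A) :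
    SpecNoneC M GY (p, [Z], w) ↔
      (finalSeenLE M p Z n ∧ YA GY w) ∨
      ∃ a u p₁ β, w = a :: u ∧ M.transA q' a Z' = some (p₁, β) ∧
        SpecNoneC M GY (p₁, β ++ δ, u) := by
  have hterm := DPDA.estep_none_of_transE M hE δ
  constructor
  · rintro ⟨f, δ', v, hr, hδ', hf, hy⟩
    rcases DPDA.rtg_through_chain hr p [Z] w rfl with ⟨i, d, hchi, he⟩ |
      ⟨i, q₂, Z₂, δ₂, hchi, hE2, a, u, p₁, β, hw, hta, hrin⟩
    · injection he with h1 h2; injection h2 with h2 h3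
      subst h1; subst h2; subst h3
      exact Or.inl ⟨⟨i, d, chain_le_of_terminal M hn hterm hchi, hchi, hf⟩, hy⟩
    · obtain ⟨hh1, hh2⟩ := DPDA.chain_terminal_unique hchi
        (DPDA.estep_none_of_transE M hE2 δ₂) hn hterm
      injection hh2 with hh2 hh3
      injection hh3 with hh3 hh4
      subst hh2; subst hh3; subst hh4
      exact Or.inr ⟨a, u, p₁, β, hw, hta, ⟨f, δ', v, hrin, hδ', hf, hy⟩⟩
  · rintro (⟨⟨i, d, hin, hchi, hf⟩, hy⟩ | ⟨a, u, p₁, β, hw, hta, ⟨f, δ', v, hrin, hδ', hf, hy⟩⟩)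
    · have hδ : d.2 ≠ [] := by
        intro h0
        have ht : M.estep d = none := by
          obtain ⟨d1, d2⟩ := d
          simp at h0
          subst h0
          exact DPDA.estep_nil M d1
        obtain ⟨h1, h2⟩ := DPDA.chain_terminal_unique hchi ht hn hterm
        rw [h2] at h0
        simp at h0
      exact ⟨d.1, d.2, w, DPDA.chain_rtg hchi w, hδ, hf, hy⟩
    · subst hw
      have h0 : ReflTransGen M.Step (p, [Z], a :: u) (q', Z' :: δ, a :: u) :=
        DPDA.chain_rtg hn (a :: u)
      have h1 : M.Step (q', Z' :: δ, a :: u) (p₁, β ++ δ, u) := DPDA.Step.readA hta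
      exact ⟨f, δ', v, (h0.tail h1).trans hrin, hδ', hf, hy⟩

theorem stab_specSome (p : Q) (Z : Γ) {n : ℕ} {q' : Q} {Z' : Γ} {δ : List Γ}
    (hn : M.chain (p, [Z]) n = some (q', Z' :: δ)) (hE : M.transE q' Z' = none)
    (w : List A) (q : Q) (v : List A) :
    SpecSomeC M GY (p, [Z], w) q v ↔
      (¬ SpecNoneC M GY (p, [Z], w)) ∧
      ∃ a u p₁ β, w = a :: u ∧ M.transA q' a Z' = some (p₁, β) ∧
        ReflTransGen M.Step (p₁, β ++ δ, u) (q, ([] : List Γ), v) := by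
  have hterm := DPDA.estep_none_of_transE M hE δ
  constructor
  · rintro ⟨hr, hN⟩
    rcases DPDA.rtg_through_chain hr p [Z] w rfl with ⟨i, d, hchi, he⟩ |
      ⟨i, q₂, Z₂, δ₂, hchi, hE2, a, u, p₁, β, hw, hta, hrin⟩
    · exfalso
      injection he with h1 h2; injection h2 with h2 h3
      have ht : M.estep d = none := by
        obtain ⟨d1, d2⟩ := d
        simp only at h2
        rw [← h2]
        exact DPDA.estep_nil M d1
      obtain ⟨hh1, hh2⟩ := DPDA.chain_terminal_unique hchi ht hn hterm
      rw [hh2] at h2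
      simp at h2
    · obtain ⟨hh1, hh2⟩ := DPDA.chain_terminal_unique hchi
        (DPDA.estep_none_of_transE M hE2 δ₂) hn hterm
      injection hh2 with hh2 hh3
      injection hh3 with hh3 hh4
      subst hh2; subst hh3; subst hh4
      exact ⟨hN, a, u, p₁, β, hw, hta, hrin⟩
  · rintro ⟨hN, a, u, p₁, β, hw, hta, hrin⟩
    subst hw
    have h0 : ReflTransGen M.Step (p, [Z], a :: u) (q', Z' :: δ, a :: u) :=
      DPDA.chain_rtg hn (a :: u)
    have h1 : M.Step (q', Z' :: δ, a :: u) (p₁, β ++ δ, u) := DPDA.Step.readA hta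
    exact ⟨(h0.tail h1).trans hrin, hN⟩

theorem div_specNone (p : Q) (Z : Γ)
    (hnop : ¬ ∃ n d, M.chain (p, [Z]) n = some d ∧ M.estep d = none) (w : List A) :
    SpecNoneC M GY (p, [Z], w) ↔ (finalSeenAll M p Z ∧ YA GY w) := by
  constructor
  · rintro ⟨f, δ', v, hr, hδ', hf, hy⟩
    rcases DPDA.rtg_through_chain hr p [Z] w rfl with ⟨i, d, hchi, he⟩ |
      ⟨i, q₂, Z₂, δ₂, hchi, hE2, -⟩
    · injection he with h1 h2; injection h2 with h2 h3
      subst h1; subst h3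
      exact ⟨⟨i, d, hchi, hf⟩, hy⟩
    · exact absurd ⟨i, _, hchi, DPDA.estep_none_of_transE M hE2 δ₂⟩ hnop
  · rintro ⟨⟨i, d, hchi, hf⟩, hy⟩
    have hδ : d.2 ≠ [] := by
      intro h0
      refine hnop ⟨i, d, hchi, ?_⟩
      obtain ⟨d1, d2⟩ := d
      simp at h0
      subst h0
      exact DPDA.estep_nil M d1
    exact ⟨d.1, d.2, w, DPDA.chain_rtg hchi w, hδ, hf, hy⟩

theorem div_specSome (p : Q) (Z : Γ)
    (hnop : ¬ ∃ n d, M.chain (p, [Z]) n = some d ∧ M.estep d = none)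
    (w : List A) (q : Q) (v : List A) : ¬ SpecSomeC M GY (p, [Z], w) q v := by
  rintro ⟨hr, -⟩
  rcases DPDA.rtg_through_chain hr p [Z] w rfl with ⟨i, d, hchi, he⟩ |
    ⟨i, q₂, Z₂, δ₂, hchi, hE2, -⟩
  · injection he with h1 h2; injection h2 with h2 h3
    refine hnop ⟨i, d, hchi, ?_⟩
    obtain ⟨d1, d2⟩ := d
    simp only at h2
    rw [← h2]
    exact DPDA.estep_nil M d1
  · exact absurd ⟨i, _, hchi, DPDA.estep_none_of_transE M hE2 δ₂⟩ hnop


/-! ### Unfolding the rule of a simulation nonterminal -/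

theorem ruleT_pop_eq {p : Q} {Z : Γ} {n : ℕ} {r : Q}
    (hn : M.chain (p, [Z]) n = some (r, ([] : List Γ))) (ρ : Option Q) :
    ruleT M GY p Z ρ = popRule M GY p Z ρ n r := by
  have h : ∃ n r, M.chain (p, [Z]) n = some (r, ([] : List Γ)) := ⟨n, r, hn⟩
  rw [ruleT, dif_pos h]
  obtain ⟨h1, h2⟩ := DPDA.chain_terminal_unique h.choose_spec.choose_spec
    (DPDA.estep_nil M _) hn (DPDA.estep_nil M r)
  injection h2 with h2 h3
  exact congrArg₂ (popRule M GY p Z ρ) h1 h2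

theorem ruleT_stab_eq {p : Q} {Z : Γ} {n : ℕ} {q' : Q} {Z' : Γ} {δ : List Γ}
    (hn : M.chain (p, [Z]) n = some (q', Z' :: δ)) (hE : M.transE q' Z' = none)
    (ρ : Option Q) :
    ruleT M GY p Z ρ = stabRule M GY p Z ρ n (q', Z' :: δ) := by
  have hterm := DPDA.estep_none_of_transE M hE δ
  have hnp : ¬ ∃ n r, M.chain (p, [Z]) n = some (r, ([] : List Γ)) := by
    rintro ⟨m, r, hm⟩
    obtain ⟨h1, h2⟩ := DPDA.chain_terminal_unique hm (DPDA.estep_nil M r) hn hterm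
    injection h2 with h2 h3
    simp at h3
  have h2ex : ∃ n d, M.chain (p, [Z]) n = some d ∧ M.estep d = none := ⟨n, _, hn, hterm⟩
  rw [ruleT, dif_neg hnp, dif_pos h2ex]
  obtain ⟨hc1, hc2⟩ := h2ex.choose_spec.choose_spec
  obtain ⟨h1, h2⟩ := DPDA.chain_terminal_unique hc1 hc2 hn hterm
  exact congrArg₂ (stabRule M GY p Z ρ) h1 h2

theorem ruleT_div_eq {p : Q} {Z : Γ}
    (hnop : ¬ ∃ n d, M.chain (p, [Z]) n = some d ∧ M.estep d = none) (ρ : Option Q) :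
    ruleT M GY p Z ρ = divRule M GY p Z ρ := by
  have hnp : ¬ ∃ n r, M.chain (p, [Z]) n = some (r, ([] : List Γ)) := by
    rintro ⟨m, r, hm⟩
    exact hnop ⟨m, (r, []), hm, DPDA.estep_nil M r⟩
  rw [ruleT, dif_neg hnp, dif_neg hnop]

theorem cont_none_nil (p : Q) :
    cont (none : Option Q) ([] : List Γ) p = (pfail : PExp (CNT Q Γ NY) A) := rfl

open Classical in
theorem cont_some_nil (p q : Q) :
    cont (some q) ([] : List Γ) p = (if p = q then .eps else pfail : PExp (CNT Q Γ NY) A) := by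
  rw [cont]

theorem cont_none_cons (p : Q) (Z : Γ) (δ : List Γ) :
    cont (none : Option Q) (Z :: δ) p =
      (.choice (.nt (ct p Z none)) (foldChoice (qList.map fun s =>
        .seq (.nt (ct p Z (some s))) (cont none δ s))) : PExp (CNT Q Γ NY) A) := rfl

theorem cont_some_cons (p q : Q) (Z : Γ) (δ : List Γ) :
    cont (some q) (Z :: δ) p =
      (foldChoice (qList.map fun s =>
        .seq (.nt (ct p Z (some s))) (cont (some q) δ s)) : PExp (CNT Q Γ NY) A) := rfl

/-! ### Correctness statement for the simulation nonterminals -/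

/-- All four correctness statements for the simulation nonterminal `(p, Z, ·)` on input `w`. -/
def TStmts (p : Q) (Z : Γ) (w : List A) : Prop :=
  (SpecNoneC M GY (p, [Z], w) →
    Parses (HG M GY) (.nt (ct p Z none)) w (some [])) ∧
  (¬ SpecNoneC M GY (p, [Z], w) →
    Parses (HG M GY) (.nt (ct p Z none)) w none) ∧
  (∀ q v, SpecSomeC M GY (p, [Z], w) q v →
    Parses (HG M GY) (.nt (ct p Z (some q))) w (some v)) ∧
  (∀ q, (¬ ∃ v, SpecSomeC M GY (p, [Z], w) q v) →
    Parses (HG M GY) (.nt (ct p Z (some q))) w none)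

/-- All correctness statements for all simulation nonterminals on input `w`. -/
def Lok (w : List A) : Prop := ∀ p Z, TStmts M GY p Z w

/-- Correctness of the continuation expressions, assuming correctness of the
simulation nonterminals on all sufficiently short inputs. -/
theorem cont_ok : ∀ (γ : List Γ) (u : List A) (p : Q),
    (∀ v', v'.length ≤ u.length → Lok M GY v') →
    (SpecNoneC M GY (p, γ, u) → Parses (HG M GY) (cont none γ p) u (some [])) ∧
    (¬ SpecNoneC M GY (p, γ, u) → Parses (HG M GY) (cont none γ p) u none) ∧
    (∀ q v, SpecSomeC M GY (p, γ, u) q v →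
      Parses (HG M GY) (cont (some q) γ p) u (some v)) ∧
    (∀ q, (¬ ∃ v, SpecSomeC M GY (p, γ, u) q v) →
      Parses (HG M GY) (cont (some q) γ p) u none) := by
  intro γ
  induction γ with
  | nil =>
      intro u p hL
      refine ⟨?_, ?_, ?_, ?_⟩
      · intro h; exact absurd h (specNoneC_nil M GY p u)
      · intro h; rw [cont_none_nil]; exact parses_pfail u
      · intro q v h
        obtain ⟨rfl, rfl⟩ := (specSomeC_nil M GY p u q v).mp h
        rw [cont_some_nil, if_pos rfl]
        exact .eps _
      · intro q h
        have hpq : p ≠ q := by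
          rintro rfl
          exact h ⟨u, (specSomeC_nil M GY p u p u).mpr ⟨rfl, rfl⟩⟩
        rw [cont_some_nil, if_neg hpq]
        exact parses_pfail u
  | cons Z δ IH =>
      intro u p hL
      have hLok := hL u le_rfl
      -- the branch for a candidate intermediate state s
      have branch_none_some : ∀ s v', SpecSomeC M GY (p, [Z], u) s v' →
          SpecNoneC M GY (s, δ, v') →
          Parses (HG M GY) (.seq (.nt (ct p Z (some s))) (cont none δ s)) u (some []) := by
        intro s v' hS hNC
        have hlen : v'.length ≤ u.length := (DPDA.rtg_input_suffix hS.1).length_le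
        exact .seq_ok ((hLok p Z).2.2.1 s v' hS)
          ((IH v' s (fun v'' h => hL v'' (h.trans hlen))).1 hNC)
      have branch_others : ∀ (k : Q → PExp (CNT Q Γ NY) A) (s s' : Q), s' ≠ s →
          (∃ v', SpecSomeC M GY (p, [Z], u) s v') →
          Parses (HG M GY) (.seq (.nt (ct p Z (some s'))) (k s')) u none := by
        intro k s s' hne ⟨v', hS⟩
        refine .seq_fail ((hLok p Z).2.2.2 s' ?_)
        rintro ⟨v₂, hv₂⟩
        exact hne (specSomeC_unique M GY hv₂ hS).1
      refine ⟨?_, ?_, ?_, ?_⟩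
      · -- SpecNoneC → some []
        intro h
        rw [cont_none_cons]
        rcases (specNoneC_cons M GY p Z δ u).mp h with h1 | ⟨s, v', hS, hNC⟩
        · exact .choice_fst ((hLok p Z).1 h1)
        · refine .choice_snd ((hLok p Z).2.1 hS.2) ?_
          apply parses_foldChoice_some (e := .seq (.nt (ct p Z (some s))) (cont none δ s))
          · exact List.mem_map.mpr ⟨s, mem_qList s, rfl⟩
          · exact branch_none_some s v' hS hNC
          · intro e' he'
            obtain ⟨s', -, rfl⟩ := List.mem_map.mp he'
            by_cases hss : s' = s
            · subst hss; exact Or.inl rfl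
            · exact Or.inr (branch_others _ s s' hss ⟨v', hS⟩)
      · -- ¬ SpecNoneC → none
        intro h
        rw [cont_none_cons]
        have hN1 : ¬ SpecNoneC M GY (p, [Z], u) := fun h1 =>
          h ((specNoneC_cons M GY p Z δ u).mpr (Or.inl h1))
        refine .choice_snd ((hLok p Z).2.1 hN1) ?_
        apply parses_foldChoice_none
        intro e' he'
        obtain ⟨s', -, rfl⟩ := List.mem_map.mp he'
        by_cases hex : ∃ v₂, SpecSomeC M GY (p, [Z], u) s' v₂
        · obtain ⟨v₂, hv₂⟩ := hex
          have hlen : v₂.length ≤ u.length := (DPDA.rtg_input_suffix hv₂.1).length_le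
          refine .seq_ok ((hLok p Z).2.2.1 s' v₂ hv₂) ?_
          refine (IH v₂ s' (fun v'' hh => hL v'' (hh.trans hlen))).2.1 ?_
          intro hNC
          exact h ((specNoneC_cons M GY p Z δ u).mpr (Or.inr ⟨s', v₂, hv₂, hNC⟩))
        · exact .seq_fail ((hLok p Z).2.2.2 s' hex)
      · -- SpecSomeC → some v
        intro q v h
        rw [cont_some_cons]
        obtain ⟨s, v', hS, hSC⟩ := (specSomeC_cons M GY p Z δ u q v).mp h
        have hlen : v'.length ≤ u.length := (DPDA.rtg_input_suffix hS.1).length_le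
        apply parses_foldChoice_some (e := .seq (.nt (ct p Z (some s))) (cont (some q) δ s))
        · exact List.mem_map.mpr ⟨s, mem_qList s, rfl⟩
        · exact .seq_ok ((hLok p Z).2.2.1 s v' hS)
            ((IH v' s (fun v'' hh => hL v'' (hh.trans hlen))).2.2.1 q v hSC)
        · intro e' he'
          obtain ⟨s', -, rfl⟩ := List.mem_map.mp he'
          by_cases hss : s' = s
          · subst hss; exact Or.inl rfl
          · exact Or.inr (branch_others _ s s' hss ⟨v', hS⟩)
      · -- no SpecSomeC → none
        intro q h
        rw [cont_some_cons]
        apply parses_foldChoice_none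
        intro e' he'
        obtain ⟨s', -, rfl⟩ := List.mem_map.mp he'
        by_cases hex : ∃ v₂, SpecSomeC M GY (p, [Z], u) s' v₂
        · obtain ⟨v₂, hv₂⟩ := hex
          have hlen : v₂.length ≤ u.length := (DPDA.rtg_input_suffix hv₂.1).length_le
          refine .seq_ok ((hLok p Z).2.2.1 s' v₂ hv₂) ?_
          refine (IH v₂ s' (fun v'' hh => hL v'' (hh.trans hlen))).2.2.2 q ?_
          rintro ⟨v₃, hv₃⟩
          exact h ⟨v₃, (specSomeC_cons M GY p Z δ u q v₃).mpr ⟨s', v₂, hv₂, hv₃⟩⟩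
        · exact .seq_fail ((hLok p Z).2.2.2 s' hex)

/-! ### Behaviour of `readExpr` -/

theorem readExpr_mem_shape {ρ : Option Q} {q' : Q} {Z' : Γ} {δ : List Γ}
    {e : PExp (CNT Q Γ NY) A}
    (he : e ∈ aList.filterMap fun a =>
      (M.transA q' a Z').map fun rβ => .seq (.term a) (cont ρ (rβ.2 ++ δ) rβ.1)) :
    ∃ a p₁ β, M.transA q' a Z' = some (p₁, β) ∧
      e = .seq (.term a) (cont ρ (β ++ δ) p₁) := by
  obtain ⟨a, -, hsome⟩ := List.mem_filterMap.mp he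
  obtain ⟨⟨p₁, β⟩, htr, rfl⟩ := Option.map_eq_some_iff.mp hsome
  exact ⟨a, p₁, β, htr, rfl⟩

theorem readExpr_nil (ρ : Option Q) (q' : Q) (Z' : Γ) (δ : List Γ) :
    Parses (HG M GY) (readExpr M ρ q' Z' δ) [] none := by
  apply parses_foldChoice_none
  intro e he
  obtain ⟨a, p₁, β, -, rfl⟩ := readExpr_mem_shape M he
  exact .seq_fail (.term_nil a)

theorem readExpr_stuck {q' : Q} {Z' : Γ} {a : A} (ρ : Option Q) (δ : List Γ) {u : List A}
    (hta : M.transA q' a Z' = none) :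
    Parses (HG M GY) (readExpr M ρ q' Z' δ) (a :: u) none := by
  apply parses_foldChoice_none
  intro e he
  obtain ⟨a₂, p₁, β, htr, rfl⟩ := readExpr_mem_shape M he
  have hne : a₂ ≠ a := by rintro rfl; rw [hta] at htr; cases htr
  exact .seq_fail (.term_mismatch u hne)

theorem readExpr_go {q' : Q} {Z' : Γ} {a : A} {p₁ : Q} {β : List Γ} (ρ : Option Q)
    (δ : List Γ) {u : List A} {r : Option (List A)}
    (hta : M.transA q' a Z' = some (p₁, β))
    (hk : Parses (HG M GY) (cont ρ (β ++ δ) p₁) u r) :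
    Parses (HG M GY) (readExpr M ρ q' Z' δ) (a :: u) r := by
  have hmem : (.seq (.term a) (cont ρ (β ++ δ) p₁) : PExp (CNT Q Γ NY) A) ∈
      aList.filterMap fun a =>
        (M.transA q' a Z').map fun rβ => .seq (.term a) (cont ρ (rβ.2 ++ δ) rβ.1) := by
    apply List.mem_filterMap.mpr
    exact ⟨a, mem_aList a, by rw [hta]; rfl⟩
  match r with
  | some v =>
      apply parses_foldChoice_some hmem (.seq_ok (.term_ok a u) hk)
      intro e' he'
      obtain ⟨a₂, p₂, β₂, htr₂, rfl⟩ := readExpr_mem_shape M he'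
      by_cases hae : a₂ = a
      · subst hae
        rw [hta] at htr₂
        injection htr₂ with htr₂
        injection htr₂ with h1 h2
        subst h1; subst h2
        exact Or.inl rfl
      · exact Or.inr (.seq_fail (.term_mismatch u hae))
  | none =>
      apply parses_foldChoice_none
      intro e' he'
      obtain ⟨a₂, p₂, β₂, htr₂, rfl⟩ := readExpr_mem_shape M he'
      by_cases hae : a₂ = a
      · subst hae
        rw [hta] at htr₂
        injection htr₂ with htr₂
        injection htr₂ with h1 h2
        subst h1; subst h2
        exact .seq_ok (.term_ok _ _) hk
      · exact .seq_fail (.term_mismatch u hae)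


open Classical in
theorem popRule_none (p : Q) (Z : Γ) (n : ℕ) (r : Q) :
    popRule M GY p Z none n r =
      (if finalSeenLT M p Z n then ytest GY else pfail : PExp (CNT Q Γ NY) A) := rfl

open Classical in
theorem popRule_some (p : Q) (Z : Γ) (n : ℕ) (r q : Q) :
    popRule M GY p Z (some q) n r =
      (if r = q then
        (if finalSeenLT M p Z n then .seq (.not (ytest GY)) .eps else .eps)
      else pfail : PExp (CNT Q Γ NY) A) := rfl

open Classical in
theorem stabRule_none (p : Q) (Z : Γ) (n : ℕ) (q' : Q) (Z' : Γ) (δ : List Γ) :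
    stabRule M GY p Z none n (q', Z' :: δ) =
      (if finalSeenLE M p Z n then
        .choice (ytest GY) (readExpr M none q' Z' δ)
      else readExpr M none q' Z' δ : PExp (CNT Q Γ NY) A) := rfl

open Classical in
theorem stabRule_some (p : Q) (Z : Γ) (n : ℕ) (q q' : Q) (Z' : Γ) (δ : List Γ) :
    stabRule M GY p Z (some q) n (q', Z' :: δ) =
      (if finalSeenLE M p Z n then
        .seq (.not (ytest GY)) (readExpr M (some q) q' Z' δ)
      else readExpr M (some q) q' Z' δ : PExp (CNT Q Γ NY) A) := rfl

open Classical in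
theorem divRule_none (p : Q) (Z : Γ) :
    divRule M GY p Z none =
      (if finalSeenAll M p Z then ytest GY else pfail : PExp (CNT Q Γ NY) A) := rfl

theorem divRule_some (p : Q) (Z : Γ) (q : Q) :
    divRule M GY p Z (some q) = (pfail : PExp (CNT Q Γ NY) A) := rfl

/-! ### The main simulation lemmas, per chain class -/

theorem tstmts_pop (hwfY : GY.WellFormed) {p : Q} {Z : Γ} {n : ℕ} {r : Q}
    (hn : M.chain (p, [Z]) n = some (r, ([] : List Γ))) (w : List A) :
    TStmts M GY p Z w := by
  have heq := ruleT_pop_eq M GY hn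
  refine ⟨?_, ?_, ?_, ?_⟩
  · intro h
    obtain ⟨hfs, hy⟩ := (pop_specNone M GY p Z hn w).mp h
    apply Parses.nt
    rw [HG_rule_t, heq none, popRule_none, if_pos hfs]
    exact parses_ytest_some M GY hy
  · intro h
    apply Parses.nt
    rw [HG_rule_t, heq none, popRule_none]
    rw [pop_specNone M GY p Z hn w] at h
    by_cases hfs : finalSeenLT M p Z n
    · rw [if_pos hfs]
      exact parses_ytest_none M GY hwfY (fun hy => h ⟨hfs, hy⟩)
    · rw [if_neg hfs]; exact parses_pfail w
  · intro q v h
    obtain ⟨h1, h2, hN⟩ := (pop_specSome M GY p Z hn w q v).mp h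
    subst h1; subst h2
    apply Parses.nt
    rw [HG_rule_t, heq (some q), popRule_some, if_pos rfl]
    rw [pop_specNone M GY p Z hn v] at hN
    by_cases hfs : finalSeenLT M p Z n
    · rw [if_pos hfs]
      exact .seq_ok (.not_succ (parses_ytest_none M GY hwfY (fun hy => hN ⟨hfs, hy⟩))) (.eps v)
    · rw [if_neg hfs]; exact .eps v
  · intro q h
    apply Parses.nt
    rw [HG_rule_t, heq (some q), popRule_some]
    by_cases hrq : r = q
    · subst hrq
      rw [if_pos rfl]
      have hSN : SpecNoneC M GY (p, [Z], w) := by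
        by_contra hN
        exact h ⟨w, (pop_specSome M GY p Z hn w r w).mpr ⟨rfl, rfl, hN⟩⟩
      obtain ⟨hfs, hy⟩ := (pop_specNone M GY p Z hn w).mp hSN
      rw [if_pos hfs]
      exact .seq_fail (.not_fail (parses_ytest_some M GY hy))
    · rw [if_neg hrq]; exact parses_pfail w

theorem tstmts_div (hwfY : GY.WellFormed) {p : Q} {Z : Γ}
    (hnop : ¬ ∃ n d, M.chain (p, [Z]) n = some d ∧ M.estep d = none) (w : List A) :
    TStmts M GY p Z w := by
  have heq := ruleT_div_eq M GY hnop
  refine ⟨?_, ?_, ?_, ?_⟩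
  · intro h
    obtain ⟨hfs, hy⟩ := (div_specNone M GY p Z hnop w).mp h
    apply Parses.nt
    rw [HG_rule_t, heq none, divRule_none, if_pos hfs]
    exact parses_ytest_some M GY hy
  · intro h
    apply Parses.nt
    rw [HG_rule_t, heq none, divRule_none]
    rw [div_specNone M GY p Z hnop w] at h
    by_cases hfs : finalSeenAll M p Z
    · rw [if_pos hfs]
      exact parses_ytest_none M GY hwfY (fun hy => h ⟨hfs, hy⟩)
    · rw [if_neg hfs]; exact parses_pfail w
  · intro q v h
    exact absurd h (div_specSome M GY p Z hnop w q v)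
  · intro q h
    apply Parses.nt
    rw [HG_rule_t, heq (some q), divRule_some]
    exact parses_pfail w

theorem tstmts_stab (hwfY : GY.WellFormed) {p : Q} {Z : Γ} {n : ℕ} {q' : Q} {Z' : Γ}
    {δ : List Γ} (hn : M.chain (p, [Z]) n = some (q', Z' :: δ))
    (hE : M.transE q' Z' = none) (w : List A)
    (hL : ∀ v', v'.length < w.length → Lok M GY v') :
    TStmts M GY p Z w := by
  have heq := ruleT_stab_eq M GY hn hE
  -- continuation facts for inputs shorter than w
  have hcont : ∀ (a : A) (u : List A), w = a :: u → ∀ (γ : List Γ) (p₁ : Q),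
      (SpecNoneC M GY (p₁, γ, u) → Parses (HG M GY) (cont none γ p₁) u (some [])) ∧
      (¬ SpecNoneC M GY (p₁, γ, u) → Parses (HG M GY) (cont none γ p₁) u none) ∧
      (∀ q v, SpecSomeC M GY (p₁, γ, u) q v →
        Parses (HG M GY) (cont (some q) γ p₁) u (some v)) ∧
      (∀ q, (¬ ∃ v, SpecSomeC M GY (p₁, γ, u) q v) →
        Parses (HG M GY) (cont (some q) γ p₁) u none) := by
    intro a u hw γ p₁
    refine cont_ok M GY γ u p₁ (fun v' hv => hL v' ?_)
    rw [hw]; simp; omega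
  refine ⟨?_, ?_, ?_, ?_⟩
  · -- SpecNoneC → some []
    intro h
    apply Parses.nt
    rw [HG_rule_t, heq none, stabRule_none]
    by_cases hy : YA GY w
    · rcases (stab_specNone M GY p Z hn hE w).mp h with ⟨hfs, -⟩ |
        ⟨a, u, p₁, β, hw, hta, hNC⟩
      · rw [if_pos hfs]
        exact .choice_fst (parses_ytest_some M GY hy)
      · have hre : Parses (HG M GY) (readExpr M none q' Z' δ) w (some []) := by
          subst hw
          exact readExpr_go M GY none δ hta ((hcont a u rfl (β ++ δ) p₁).1 hNC)
        by_cases hfs : finalSeenLE M p Z n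
        · rw [if_pos hfs]
          exact .choice_fst (parses_ytest_some M GY hy)
        · rw [if_neg hfs]; exact hre
    · -- ¬ YA w : the event must come from the reading part
      rcases (stab_specNone M GY p Z hn hE w).mp h with ⟨-, hy'⟩ |
        ⟨a, u, p₁, β, hw, hta, hNC⟩
      · exact absurd hy' hy
      · have hre : Parses (HG M GY) (readExpr M none q' Z' δ) w (some []) := by
          subst hw
          exact readExpr_go M GY none δ hta ((hcont a u rfl (β ++ δ) p₁).1 hNC)
        by_cases hfs : finalSeenLE M p Z n
        · rw [if_pos hfs]
          exact .choice_snd (parses_ytest_none M GY hwfY hy) hre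
        · rw [if_neg hfs]; exact hre
  · -- ¬ SpecNoneC → none
    intro h
    apply Parses.nt
    rw [HG_rule_t, heq none, stabRule_none]
    have hA : ¬ (finalSeenLE M p Z n ∧ YA GY w) := fun hh =>
      h ((stab_specNone M GY p Z hn hE w).mpr (Or.inl hh))
    have hre : Parses (HG M GY) (readExpr M none q' Z' δ) w none := by
      match w with
      | [] => exact readExpr_nil M GY none q' Z' δ
      | a :: u =>
          match hta : M.transA q' a Z' with
          | none => exact readExpr_stuck M GY none δ hta
          | some (p₁, β) =>
              refine readExpr_go M GY none δ hta ((hcont a u rfl (β ++ δ) p₁).2.1 ?_)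
              intro hNC
              exact h ((stab_specNone M GY p Z hn hE (a :: u)).mpr
                (Or.inr ⟨a, u, p₁, β, rfl, hta, hNC⟩))
    by_cases hfs : finalSeenLE M p Z n
    · rw [if_pos hfs]
      exact .choice_snd (parses_ytest_none M GY hwfY (fun hy => hA ⟨hfs, hy⟩)) hre
    · rw [if_neg hfs]; exact hre
  · -- SpecSomeC → some v
    intro q v h
    apply Parses.nt
    rw [HG_rule_t, heq (some q), stabRule_some]
    obtain ⟨hN, a, u, p₁, β, hw, hta, hrin⟩ := (stab_specSome M GY p Z hn hE w q v).mp h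
    have hNC : ¬ SpecNoneC M GY (p₁, β ++ δ, u) := by
      intro hh
      exact hN ((stab_specNone M GY p Z hn hE w).mpr (Or.inr ⟨a, u, p₁, β, hw, hta, hh⟩))
    have hre : Parses (HG M GY) (readExpr M (some q) q' Z' δ) w (some v) := by
      subst hw
      exact readExpr_go M GY (some q) δ hta
        ((hcont a u rfl (β ++ δ) p₁).2.2.1 q v ⟨hrin, hNC⟩)
    by_cases hfs : finalSeenLE M p Z n
    · rw [if_pos hfs]
      have hy : ¬ YA GY w := fun hy =>
        hN ((stab_specNone M GY p Z hn hE w).mpr (Or.inl ⟨hfs, hy⟩))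
      exact .seq_ok (.not_succ (parses_ytest_none M GY hwfY hy)) hre
    · rw [if_neg hfs]; exact hre
  · -- no SpecSomeC → none
    intro q h
    apply Parses.nt
    rw [HG_rule_t, heq (some q), stabRule_some]
    by_cases hfsy : finalSeenLE M p Z n ∧ YA GY w
    · rw [if_pos hfsy.1]
      exact .seq_fail (.not_fail (parses_ytest_some M GY hfsy.2))
    · have hre : Parses (HG M GY) (readExpr M (some q) q' Z' δ) w none := by
        match w with
        | [] => exact readExpr_nil M GY (some q) q' Z' δ
        | a :: u =>
            match hta : M.transA q' a Z' with
            | none => exact readExpr_stuck M GY (some q) δ hta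
            | some (p₁, β) =>
                refine readExpr_go M GY (some q) δ hta
                  ((hcont a u rfl (β ++ δ) p₁).2.2.2 q ?_)
                rintro ⟨v, hv⟩
                by_cases hSN : SpecNoneC M GY (p, [Z], a :: u)
                · rcases (stab_specNone M GY p Z hn hE (a :: u)).mp hSN with hh |
                    ⟨a₂, u₂, p₂, β₂, hw₂, hta₂, hNC₂⟩
                  · exact hfsy hh
                  · injection hw₂ with hw₂ hw₃
                    subst hw₂; subst hw₃
                    rw [hta] at hta₂
                    injection hta₂ with hta₂
                    injection hta₂ with h1 h2
                    subst h1; subst h2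
                    exact hv.2 hNC₂
                · exact h ⟨v, (stab_specSome M GY p Z hn hE (a :: u) q v).mpr
                    ⟨hSN, a, u, p₁, β, rfl, hta, hv.1⟩⟩
      by_cases hfs : finalSeenLE M p Z n
      · rw [if_pos hfs]
        have hy : ¬ YA GY w := fun hy => hfsy ⟨hfs, hy⟩
        exact .seq_ok (.not_succ (parses_ytest_none M GY hwfY hy)) hre
      · rw [if_neg hfs]; exact hre

/-- The master correctness theorem for all simulation nonterminals. -/
theorem lok_all (hwfY : GY.WellFormed) : ∀ w : List A, Lok M GY w := by
  suffices H : ∀ (k : ℕ) (w : List A), w.length ≤ k → Lok M GY w by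
    exact fun w => H w.length w le_rfl
  intro k
  induction k using Nat.strong_induction_on with
  | _ k IH =>
      intro w hw p Z
      have hL : ∀ v', v'.length < w.length → Lok M GY v' := fun v' hv =>
        IH v'.length (by omega) v' le_rfl
      by_cases hp : ∃ n r, M.chain (p, [Z]) n = some (r, ([] : List Γ))
      · obtain ⟨n, r, hn⟩ := hp
        exact tstmts_pop M GY hwfY hn w
      · by_cases hs : ∃ n d, M.chain (p, [Z]) n = some d ∧ M.estep d = none
        · obtain ⟨n, ⟨q', γ'⟩, hn, ht⟩ := hs
          match γ', hn, ht with
          | [], hn, ht => exact absurd ⟨n, q', hn⟩ hp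
          | Z' :: δ, hn, ht =>
              have hE : M.transE q' Z' = none := by
                by_contra hne
                rcases Option.ne_none_iff_exists'.mp hne with ⟨x, hx⟩
                rw [DPDA.estep, hx] at ht
                cases ht
              exact tstmts_stab M GY hwfY hn hE w hL
        · exact tstmts_div M GY hwfY hs w


/-! ### The start symbol -/

theorem start_some (hwfY : GY.WellFormed) {w : List A}
    (h : SpecNoneC M GY (M.init, [M.Z0], w) ∨
      ∃ s v, SpecSomeC M GY (M.init, [M.Z0], w) s v ∧ M.final s = true ∧ YA GY v) :
    Parses (HG M GY) (.nt (none : CNT Q Γ NY)) w (some []) := by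
  have hLok := lok_all M GY hwfY w M.init M.Z0
  apply Parses.nt
  rw [HG_rule_start, startRule]
  rcases h with h | ⟨s, v, hS, hf, hy⟩
  · exact .choice_fst (hLok.1 h)
  · refine .choice_snd (hLok.2.1 hS.2) ?_
    apply parses_foldChoice_some
      (e := .seq (.nt (ct M.init M.Z0 (some s)))
        (if M.final s = true then ytest GY else pfail))
    · exact List.mem_map.mpr ⟨s, mem_qList s, rfl⟩
    · refine .seq_ok (hLok.2.2.1 s v hS) ?_
      rw [if_pos hf]
      exact parses_ytest_some M GY hy
    · intro e' he'
      obtain ⟨s', -, rfl⟩ := List.mem_map.mp he'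
      by_cases hss : s' = s
      · subst hss; exact Or.inl rfl
      · refine Or.inr (.seq_fail (hLok.2.2.2 s' ?_))
        rintro ⟨v₂, hv₂⟩
        exact hss (specSomeC_unique M GY hv₂ hS).1

theorem start_none (hwfY : GY.WellFormed) {w : List A}
    (h : ¬ (SpecNoneC M GY (M.init, [M.Z0], w) ∨
      ∃ s v, SpecSomeC M GY (M.init, [M.Z0], w) s v ∧ M.final s = true ∧ YA GY v)) :
    Parses (HG M GY) (.nt (none : CNT Q Γ NY)) w none := by
  have hLok := lok_all M GY hwfY w M.init M.Z0
  push_neg at h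
  obtain ⟨hN, hS⟩ := h
  apply Parses.nt
  rw [HG_rule_start, startRule]
  refine .choice_snd (hLok.2.1 hN) ?_
  apply parses_foldChoice_none
  intro e' he'
  obtain ⟨s', -, rfl⟩ := List.mem_map.mp he'
  by_cases hex : ∃ v, SpecSomeC M GY (M.init, [M.Z0], w) s' v
  · obtain ⟨v, hv⟩ := hex
    refine .seq_ok (hLok.2.2.1 s' v hv) ?_
    by_cases hf : M.final s' = true
    · rw [if_pos hf]
      exact parses_ytest_none M GY hwfY (fun hy => hS s' v hv hf hy)
    · rw [if_neg hf]
      exact parses_pfail v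
  · exact .seq_fail (hLok.2.2.2 s' hex)

/-- The acceptance condition for `X·Y` in terms of reachable configurations. -/
def FinalEv (w : List A) : Prop :=
  ∃ f δ v, ReflTransGen M.Step (M.init, [M.Z0], w) (f, δ, v) ∧
    M.final f = true ∧ YA GY v

theorem finalEv_iff_disj (w : List A) :
    FinalEv M GY w ↔
      (SpecNoneC M GY (M.init, [M.Z0], w) ∨
        ∃ s v, SpecSomeC M GY (M.init, [M.Z0], w) s v ∧ M.final s = true ∧ YA GY v) := by
  constructor
  · rintro ⟨f, δ, v, hr, hf, hy⟩
    match δ with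
    | [] =>
        by_cases hN : SpecNoneC M GY (M.init, [M.Z0], w)
        · exact Or.inl hN
        · exact Or.inr ⟨f, v, ⟨hr, hN⟩, hf, hy⟩
    | Z :: δ' => exact Or.inl ⟨f, Z :: δ', v, hr, List.cons_ne_nil Z δ', hf, hy⟩
  · rintro (⟨f, δ, v, hr, -, hf, hy⟩ | ⟨s, v, ⟨hr, -⟩, hf, hy⟩)
    · exact ⟨f, δ, v, hr, hf, hy⟩
    · exact ⟨s, [], v, hr, hf, hy⟩

theorem lang_iff (hwfY : GY.WellFormed) (w : List A) :
    w ∈ (HG M GY).Lang ↔ FinalEv M GY w := by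
  constructor
  · intro h
    by_contra hEv
    have h2 := start_none M GY hwfY (fun hd => hEv ((finalEv_iff_disj M GY w).mpr hd))
    have := (h : Parses (HG M GY) (.nt (HG M GY).start) w (some [])).det h2
    cases this
  · intro h
    exact start_some M GY hwfY ((finalEv_iff_disj M GY w).mp h)

theorem finalEv_iff_concat (w : List A) :
    FinalEv M GY w ↔ w ∈ concatL M.Lang GY.Lang := by
  constructor
  · rintro ⟨f, δ, v, hr, hf, hy⟩
    obtain ⟨u, rfl⟩ := DPDA.rtg_input_suffix hr
    have hdrop := DPDA.rtg_input_drop hr M.init [M.Z0] (u ++ v) u rfl rfl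
    exact ⟨u, ⟨f, δ, hdrop, hf⟩, v, hy, rfl⟩
  · rintro ⟨u, ⟨p, γ, hr, hf⟩, v, hv, rfl⟩
    have := DPDA.rtg_input_append hr v
    simp only [List.nil_append] at this
    exact ⟨p, γ, v, this, hf, hv⟩

/-! ### Well-formedness of the constructed grammar -/

theorem leftNts_pfail : (pfail : PExp (CNT Q Γ NY) A).leftNts = ∅ := by
  simp [pfail, PExp.leftNts]

theorem leftNts_anyChar : (anyChar : PExp (CNT Q Γ NY) A).leftNts = ∅ := by
  rw [anyChar, leftNts_foldChoice]
  ext x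
  simp only [Set.mem_iUnion, List.mem_map, Set.mem_empty_iff_false, iff_false]
  rintro ⟨e, ⟨a, -, rfl⟩, hx⟩
  simp [PExp.leftNts] at hx

theorem leftNts_atEnd : (atEnd : PExp (CNT Q Γ NY) A).leftNts = ∅ := by
  rw [atEnd]
  show (anyChar : PExp (CNT Q Γ NY) A).leftNts = ∅
  exact leftNts_anyChar

theorem leftNts_ytest : (ytest GY : PExp (CNT Q Γ NY) A).leftNts = {cy GY.start} := by
  rw [ytest]
  show (PExp.nt (cy GY.start)).leftNts ∪ _ = _
  simp [PExp.leftNts, PExp.maybeEmpty, leftNts_atEnd, leftNts_anyChar]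

theorem leftNts_readExpr (ρ : Option Q) (q' : Q) (Z' : Γ) (δ : List Γ) :
    (readExpr M ρ q' Z' δ : PExp (CNT Q Γ NY) A).leftNts = ∅ := by
  rw [readExpr, leftNts_foldChoice]
  ext x
  simp only [Set.mem_iUnion, Set.mem_empty_iff_false, iff_false]
  rintro ⟨e, he, hx⟩
  obtain ⟨a, p₁, β, -, rfl⟩ := readExpr_mem_shape M he
  simp [PExp.leftNts, PExp.maybeEmpty] at hx

theorem leftNts_ruleT (p : Q) (Z : Γ) (ρ : Option Q) :
    (ruleT M GY p Z ρ).leftNts ⊆ {cy GY.start} := by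
  have hpop : ∀ n r, (popRule M GY p Z ρ n r).leftNts ⊆ {cy GY.start} := by
    intro n r
    match ρ with
    | none =>
        rw [popRule_none]
        split
        · rw [leftNts_ytest]
        · rw [leftNts_pfail]; exact Set.empty_subset _
    | some q =>
        rw [popRule_some]
        split
        · split
          · show ((PExp.not (ytest GY)).leftNts ∪ _) ⊆ _
            simp [PExp.leftNts, PExp.maybeEmpty, leftNts_ytest, leftNts_atEnd, leftNts_anyChar]
          · simp [PExp.leftNts]
        · rw [leftNts_pfail]; exact Set.empty_subset _
  have hstab : ∀ n d, (stabRule M GY p Z ρ n d).leftNts ⊆ {cy GY.start} := by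
    intro n d
    match d with
    | (q₁, []) =>
        match ρ with
        | none => rw [show stabRule M GY p Z none n (q₁, []) = pfail from rfl,
            leftNts_pfail]; exact Set.empty_subset _
        | some q => rw [show stabRule M GY p Z (some q) n (q₁, []) = pfail from rfl,
            leftNts_pfail]; exact Set.empty_subset _
    | (q₁, Z₁ :: δ₁) =>
        match ρ with
        | none =>
            rw [stabRule_none]
            split
            · show ((ytest GY).leftNts ∪ _) ⊆ _
              simp [leftNts_ytest, leftNts_readExpr]
            · rw [leftNts_readExpr]; exact Set.empty_subset _
        | some q =>
            rw [stabRule_some]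
            split
            · show ((PExp.not (ytest GY)).leftNts ∪ _) ⊆ _
              simp [PExp.leftNts, PExp.maybeEmpty, leftNts_ytest, leftNts_atEnd,
                leftNts_anyChar, leftNts_readExpr]
            · rw [leftNts_readExpr]; exact Set.empty_subset _
  have hdiv : (divRule M GY p Z ρ).leftNts ⊆ {cy GY.start} := by
    match ρ with
    | none =>
        rw [divRule_none]
        split
        · rw [leftNts_ytest]
        · rw [leftNts_pfail]; exact Set.empty_subset _
    | some q => rw [divRule_some, leftNts_pfail]; exact Set.empty_subset _
  rw [ruleT]
  split
  · apply hpop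
  · split
    · apply hstab
    · exact hdiv

theorem leftNts_startRule :
    (startRule M GY : PExp (CNT Q Γ NY) A).leftNts ⊆
      {ct M.init M.Z0 none} ∪ (⋃ s : Q, {ct M.init M.Z0 (some s)}) ∪ {cy GY.start} := by
  rw [startRule]
  show ((PExp.nt (ct M.init M.Z0 none)).leftNts ∪ _) ⊆ _
  simp only [PExp.leftNts]
  intro x hx
  rcases hx with hx | hx
  · simp at hx
    simp [hx]
  · rw [leftNts_foldChoice] at hx
    simp only [Set.mem_iUnion, List.mem_map] at hx
    obtain ⟨e, ⟨s, -, rfl⟩, hx⟩ := hx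
    have : x ∈ ({ct M.init M.Z0 (some s)} : Set (CNT Q Γ NY)) ∪ {cy GY.start} := by
      revert hx
      show x ∈ ((PExp.nt (ct M.init M.Z0 (some s))).leftNts ∪ _) → _
      simp only [PExp.leftNts, PExp.maybeEmpty, if_pos]
      intro hx
      rcases hx with hx | hx
      · simp at hx; simp [hx]
      · split at hx
        · rw [leftNts_ytest] at hx
          simp at hx; simp [hx]
        · rw [leftNts_pfail] at hx
          cases hx
    rcases this with h | h
    · left; right
      simp only [Set.mem_iUnion]
      exact ⟨s, h⟩
    · right; exact h

/-- Ranking used to exclude left-recursion through the new nonterminals. -/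
def cntRank : CNT Q Γ NY → ℕ
  | none => 2
  | some (Sum.inr _) => 1
  | some (Sum.inl _) => 0

theorem HG_edge {X X' : CNT Q Γ NY} (h : X' ∈ ((HG M GY).rule X).leftNts) :
    cntRank X' < cntRank X ∨
      ∃ n m, X = cy n ∧ X' = cy m ∧ m ∈ (GY.rule n).leftNts := by
  match X with
  | none =>
      left
      have := leftNts_startRule M GY h
      rcases this with (h | h) | h
      · simp at h; subst h; simp [cntRank, ct]
      · simp only [Set.mem_iUnion] at h
        obtain ⟨s, h⟩ := h
        simp at h; subst h; simp [cntRank, ct]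
      · simp at h; subst h; simp [cntRank, cy]
  | some (Sum.inr (p, Z, ρ)) =>
      left
      have := leftNts_ruleT M GY p Z ρ h
      simp at this; subst this; simp [cntRank, cy]
  | some (Sum.inl n) =>
      right
      have : X' ∈ cy '' (GY.rule n).leftNts := by
        rw [← PExp.mapN_leftNts]
        exact h
      obtain ⟨m, hm, rfl⟩ := this
      exact ⟨n, m, rfl, rfl, hm⟩

theorem HG_wf (hwfY : GY.WellFormed) : (HG M GY).WellFormed := by
  intro B hB
  have key : ∀ X X' : CNT Q Γ NY,
      Relation.TransGen (fun U V => V ∈ ((HG M GY).rule U).leftNts) X X' →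
      cntRank X' < cntRank X ∨
        ∃ n m, X = cy n ∧ X' = cy m ∧
          Relation.TransGen (fun U V : NY => V ∈ (GY.rule U).leftNts) n m := by
    intro X X' h
    induction h with
    | single h =>
        rcases HG_edge M GY h with h | ⟨n, m, h1, h2, h3⟩
        · exact Or.inl h
        · exact Or.inr ⟨n, m, h1, h2, .single h3⟩
    | tail _ hedge IH =>
        rcases IH with h1 | ⟨n, m, hX, hY', h3'⟩
        · rcases HG_edge M GY hedge with h2 | ⟨n2, m2, hY, hZ, h3⟩
          · exact Or.inl (h2.trans h1)
          · left
            subst hY; subst hZ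
            have e1 : cntRank (cy m2 : CNT Q Γ NY) = cntRank (cy n2 : CNT Q Γ NY) := rfl
            rw [e1]
            exact h1
        · rcases HG_edge M GY hedge with h2 | ⟨n2, m2, hY, hZ, h3⟩
          · exfalso
            rw [hY'] at h2
            have : cntRank (cy m : CNT Q Γ NY) = 0 := rfl
            omega
          · have hm : m = n2 := cy_injective (hY'.symm.trans hY)
            subst hm
            exact Or.inr ⟨n, m2, hX, hZ, h3'.tail h3⟩
  rcases key B B hB with h | ⟨n, m, h1, h2, h3⟩
  · omega
  · rw [h1] at h2
    have : n = m := cy_injective h2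
    subst this
    exact hwfY n h3

end Construction
/-- If `X` is a DCFL and `Y` is a PEL, then `XY` is a PEL. -/
theorem dcfl_concat_pel {A : Type} [Finite A] (X Y : Set (List A))
    (hX : IsDCFL X) (hY : IsPEL Y) : IsPEL (concatL X Y) := by
  obtain ⟨Q, Γ, hQ, hΓ, M, hML⟩ := hX
  obtain ⟨NY, hNY, GY, hwfY, hGL⟩ := hY
  haveI := hQ; haveI := hΓ; haveI := hNY
  refine ⟨CNT Q Γ NY, ?_, HG M GY, HG_wf M GY hwfY, ?_⟩
  · infer_instance
  ext w
  show w ∈ (HG M GY).Lang ↔ w ∈ concatL X Y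
  rw [lang_iff M GY hwfY w, finalEv_iff_concat M GY w, hML, hGL]
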